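/- arXiv:chao-dyn/9906035 — 5 statements merged into one kernel-verified Lean document; each statement's English description precedes it below -/
import Mathlib

section
/- The value function satisfies Bellman's dynamic programming principle: for all s < r < t and all x, y ∈ ℝ, L(s,y;t,x) = inf_{z ∈ ℝ} (L(s,y;r,z) + L(r,z;t,x)). -/
open MeasureTheory

/-- An admissible trajectory from `(s,y)` to `(t,x)`: `ξ` is absolutely continuous on
`[s,t]` with (a.e.) derivative `g`, i.e. `ξ r = y + ∫_s^r g` on `[s,t]`, `g` being
interval integrable, and `ξ t = x` (so also `ξ s = y`). -/
def Admissible (s y t x : ℝ) (ξ g : ℝ → ℝ) : Prop :=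
  IntervalIntegrable g volume s t ∧
  (∀ r ∈ Set.Icc s t, ξ r = y + ∫ τ in s..r, g τ) ∧ ξ t = x

/-- The value function `L(s,y;t,x)`: the infimum of the action
`∫_s^t [L₀(ξ'(τ)) − U(τ,ξ(τ))] dτ` over admissible trajectories from `(s,y)` to `(t,x)`. -/
noncomputable def val (L0 : ℝ → ℝ) (U : ℝ → ℝ → ℝ) (s y t x : ℝ) : ℝ :=
  sInf { A | ∃ ξ g : ℝ → ℝ, Admissible s y t x ξ g ∧
    IntervalIntegrable (fun τ => L0 (g τ) - U τ (ξ τ)) volume s t ∧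
    A = ∫ τ in s..t, (L0 (g τ) - U τ (ξ τ)) }

/-- The action set over which `val` takes the infimum. -/
def ASet (L0 : ℝ → ℝ) (U : ℝ → ℝ → ℝ) (s y t x : ℝ) : Set ℝ :=
  { A | ∃ ξ g : ℝ → ℝ, Admissible s y t x ξ g ∧
    IntervalIntegrable (fun τ => L0 (g τ) - U τ (ξ τ)) volume s t ∧
    A = ∫ τ in s..t, (L0 (g τ) - U τ (ξ τ)) }

lemma val_eq_sInf (L0 : ℝ → ℝ) (U : ℝ → ℝ → ℝ) (s y t x : ℝ) :
    val L0 U s y t x = sInf (ASet L0 U s y t x) := rfl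

/-- `L0` is bounded below. -/
lemma aux_L0_lb (L0 : ℝ → ℝ) (hL0cont : Continuous L0)
    (hL0sup : ∀ N > (0 : ℝ), ∃ P > (0 : ℝ), ∀ v : ℝ, P < |v| → N * |v| < L0 v) :
    ∃ m : ℝ, ∀ v, m ≤ L0 v := by
  obtain ⟨P, hP, h⟩ := hL0sup 1 one_pos
  obtain ⟨v0, hv0, hmin⟩ := (isCompact_Icc (a := -P) (b := P)).exists_isMinOn
    (Set.nonempty_Icc.2 (by linarith)) hL0cont.continuousOn
  refine ⟨min (L0 v0) 0, fun v => ?_⟩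
  by_cases hv : |v| ≤ P
  · have := hmin (Set.mem_Icc.2 ⟨(abs_le.mp hv).1, (abs_le.mp hv).2⟩)
    exact le_trans (min_le_left _ _) this
  · have h1 := h v (lt_of_not_ge hv)
    have h2 : (0:ℝ) ≤ |v| := abs_nonneg v
    have : (0:ℝ) ≤ L0 v := by nlinarith
    exact le_trans (min_le_right _ _) this

/-- Lower bound for any element of the action set. -/
lemma aux_action_lb (L0 : ℝ → ℝ) (U : ℝ → ℝ → ℝ) (m K : ℝ)
    (hm : ∀ v, m ≤ L0 v) (hK : ∀ t x : ℝ, |U t x| ≤ K)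
    {s y t x A : ℝ} (hst : s ≤ t) (hA : A ∈ ASet L0 U s y t x) :
    (m - K) * (t - s) ≤ A := by
  obtain ⟨ξ, g, _, hint, rfl⟩ := hA
  have h1 : (m - K) * (t - s) = ∫ _ in s..t, (m - K) := by
    rw [intervalIntegral.integral_const, smul_eq_mul]; ring
  rw [h1]
  refine intervalIntegral.integral_mono_on hst intervalIntegrable_const hint ?_
  intro τ _
  have h2 := (abs_le.mp (hK τ (ξ τ))).2
  have h3 := hm (g τ)
  show m - K ≤ L0 (g τ) - U τ (ξ τ)
  linarith

/-- The action set is nonempty (straight-line trajectory). -/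
lemma aux_nonempty (L0 : ℝ → ℝ) (U : ℝ → ℝ → ℝ)
    (hUcont : Continuous fun q : ℝ × ℝ => U q.1 q.2)
    {s t : ℝ} (hst : s < t) (y x : ℝ) :
    (ASet L0 U s y t x).Nonempty := by
  have hts : t - s ≠ 0 := ne_of_gt (by linarith)
  set c : ℝ := (x - y) / (t - s) with hc
  refine ⟨_, fun τ => y + c * (τ - s), fun _ => c, ⟨intervalIntegrable_const, ?_, ?_⟩, ?_, rfl⟩
  · intro τ _
    rw [intervalIntegral.integral_const, smul_eq_mul, mul_comm]
  · rw [hc]; field_simp; ring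
  · have hpair : Continuous fun τ : ℝ => ((τ, y + c * (τ - s)) : ℝ × ℝ) := by continuity
    have hcont : Continuous fun τ : ℝ => U τ (y + c * (τ - s)) := hUcont.comp hpair
    exact (continuous_const.sub hcont).intervalIntegrable _ _

/-- Concatenation of trajectories: sums of actions lie in the full action set. -/
lemma aux_concat (L0 : ℝ → ℝ) (U : ℝ → ℝ → ℝ)
    {s r t y z x a b : ℝ} (hsr : s < r) (hrt : r < t)
    (ha : a ∈ ASet L0 U s y r z) (hb : b ∈ ASet L0 U r z t x) :
    a + b ∈ ASet L0 U s y t x := by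
  obtain ⟨ξ1, g1, ⟨hg1, hξ1, hξ1r⟩, hint1, rfl⟩ := ha
  obtain ⟨ξ2, g2, ⟨hg2, hξ2, hξ2t⟩, hint2, rfl⟩ := hb
  set ξ : ℝ → ℝ := fun τ => if τ ≤ r then ξ1 τ else ξ2 τ with hξdef
  set g : ℝ → ℝ := fun τ => if τ ≤ r then g1 τ else g2 τ with hgdef
  -- g agrees with g1 below r, with g2 above r
  have hgEq1 : ∀ u : ℝ, u ≤ r → g u = g1 u := fun u hu => if_pos hu
  have hgEq2 : ∀ u : ℝ, r < u → g u = g2 u := fun u hu => if_neg (not_le.2 hu)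
  have hgsr : IntervalIntegrable g volume s r := by
    rw [intervalIntegrable_iff] at hg1 ⊢
    refine hg1.congr_fun ?_ measurableSet_uIoc
    intro u hu
    rw [Set.uIoc_of_le hsr.le] at hu
    exact (hgEq1 u hu.2).symm
  have hgrt : IntervalIntegrable g volume r t := by
    rw [intervalIntegrable_iff] at hg2 ⊢
    refine hg2.congr_fun ?_ measurableSet_uIoc
    intro u hu
    rw [Set.uIoc_of_le hrt.le] at hu
    exact (hgEq2 u hu.1).symm
  have hgst : IntervalIntegrable g volume s t := hgsr.trans hgrt
  -- integrals of g
  have hInt1 : ∀ τ ∈ Set.Icc s r, (∫ u in s..τ, g u) = ∫ u in s..τ, g1 u := by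
    intro τ hτ
    refine intervalIntegral.integral_congr fun u hu => ?_
    rw [Set.uIcc_of_le hτ.1] at hu
    exact hgEq1 u (hu.2.trans hτ.2)
  have hInt2 : ∀ τ : ℝ, r ≤ τ → (∫ u in r..τ, g u) = ∫ u in r..τ, g2 u := by
    intro τ hτ
    refine intervalIntegral.integral_congr_ae (Filter.Eventually.of_forall fun u hu => ?_)
    rw [Set.uIoc_of_le hτ] at hu
    exact hgEq2 u hu.1
  have hzy : z = y + ∫ u in s..r, g1 u := by
    rw [← hξ1r]; exact hξ1 r ⟨hsr.le, le_rfl⟩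
  -- admissibility of the glued trajectory
  have hadm : ∀ τ ∈ Set.Icc s t, ξ τ = y + ∫ u in s..τ, g u := by
    intro τ hτ
    by_cases hτr : τ ≤ r
    · show (if τ ≤ r then ξ1 τ else ξ2 τ) = _
      rw [if_pos hτr, hξ1 τ ⟨hτ.1, hτr⟩, hInt1 τ ⟨hτ.1, hτr⟩]
    · push_neg at hτr
      show (if τ ≤ r then ξ1 τ else ξ2 τ) = _
      rw [if_neg (not_le.2 hτr)]
      have hsplit : (∫ u in s..τ, g u) = (∫ u in s..r, g u) + ∫ u in r..τ, g u :=
        (intervalIntegral.integral_add_adjacent_intervals hgsr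
          (hgrt.mono_set (Set.uIcc_subset_uIcc Set.left_mem_uIcc
            (Set.mem_uIcc.2 (Or.inl ⟨hτr.le, hτ.2⟩))))).symm
      rw [hξ2 τ ⟨hτr.le, hτ.2⟩, hsplit, hInt1 r ⟨hsr.le, le_rfl⟩,
        hInt2 τ hτr.le, hzy]
      ring
  have hξt : ξ t = x := by
    show (if t ≤ r then ξ1 t else ξ2 t) = x
    rw [if_neg (not_le.2 hrt), hξ2t]
  -- the integrand
  set F : ℝ → ℝ := fun τ => L0 (g τ) - U τ (ξ τ) with hF
  have hFEq1 : ∀ u : ℝ, u ≤ r → F u = L0 (g1 u) - U u (ξ1 u) := by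
    intro u hu
    simp only [hF, hξdef, hgdef, if_pos hu]
  have hFEq2 : ∀ u : ℝ, r < u → F u = L0 (g2 u) - U u (ξ2 u) := by
    intro u hu
    simp only [hF, hξdef, hgdef, if_neg (not_le.2 hu)]
  have hFsr : IntervalIntegrable F volume s r := by
    rw [intervalIntegrable_iff] at hint1 ⊢
    refine hint1.congr_fun ?_ measurableSet_uIoc
    intro u hu
    rw [Set.uIoc_of_le hsr.le] at hu
    exact (hFEq1 u hu.2).symm
  have hFrt : IntervalIntegrable F volume r t := by
    rw [intervalIntegrable_iff] at hint2 ⊢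
    refine hint2.congr_fun ?_ measurableSet_uIoc
    intro u hu
    rw [Set.uIoc_of_le hrt.le] at hu
    exact (hFEq2 u hu.1).symm
  have hIF1 : (∫ u in s..r, F u) = ∫ u in s..r, (L0 (g1 u) - U u (ξ1 u)) := by
    refine intervalIntegral.integral_congr fun u hu => ?_
    rw [Set.uIcc_of_le hsr.le] at hu
    exact hFEq1 u hu.2
  have hIF2 : (∫ u in r..t, F u) = ∫ u in r..t, (L0 (g2 u) - U u (ξ2 u)) := by
    refine intervalIntegral.integral_congr_ae (Filter.Eventually.of_forall fun u hu => ?_)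
    rw [Set.uIoc_of_le hrt.le] at hu
    exact hFEq2 u hu.1
  refine ⟨ξ, g, ⟨hgst, hadm, hξt⟩, hFsr.trans hFrt, ?_⟩
  rw [← intervalIntegral.integral_add_adjacent_intervals hFsr hFrt, hIF1, hIF2]

/-- Splitting a trajectory at an intermediate time. -/
lemma aux_split (L0 : ℝ → ℝ) (U : ℝ → ℝ → ℝ)
    {s r t y x A : ℝ} (hsr : s ≤ r) (hrt : r ≤ t)
    (hA : A ∈ ASet L0 U s y t x) :
    ∃ z A1 A2, A1 ∈ ASet L0 U s y r z ∧ A2 ∈ ASet L0 U r z t x ∧ A = A1 + A2 := by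
  obtain ⟨ξ, g, ⟨hg, hξ, hξt⟩, hint, rfl⟩ := hA
  have hsub1 : Set.uIcc s r ⊆ Set.uIcc s t :=
    Set.uIcc_subset_uIcc (by simp) (by simp [Set.mem_uIcc]; left; exact ⟨hsr, hrt⟩)
  have hsub2 : Set.uIcc r t ⊆ Set.uIcc s t :=
    Set.uIcc_subset_uIcc (by simp [Set.mem_uIcc]; left; exact ⟨hsr, hrt⟩) (by simp)
  have hg1 := hg.mono_set hsub1
  have hg2 := hg.mono_set hsub2
  have hint1 := hint.mono_set hsub1
  have hint2 := hint.mono_set hsub2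
  refine ⟨ξ r, _, _, ⟨ξ, g, ⟨hg1, fun τ hτ => hξ τ ⟨hτ.1, hτ.2.trans hrt⟩, rfl⟩, hint1, rfl⟩,
    ⟨ξ, g, ⟨hg2, ?_, hξt⟩, hint2, rfl⟩, ?_⟩
  · intro τ hτ
    have hgr : IntervalIntegrable g volume r τ :=
      hg.mono_set (Set.uIcc_subset_uIcc
        (by simp [Set.mem_uIcc]; left; exact ⟨hsr, hrt⟩)
        (by simp [Set.mem_uIcc]; left; exact ⟨hsr.trans hτ.1, hτ.2⟩))
    have := intervalIntegral.integral_add_adjacent_intervals hg1 hgr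
    rw [hξ τ ⟨hsr.trans hτ.1, hτ.2⟩, hξ r ⟨hsr, hrt⟩, ← this]
    ring
  · exact (intervalIntegral.integral_add_adjacent_intervals hint1 hint2).symm

/-- Bellman's dynamic programming principle: for all `s < r < t`,
`L(s,y;t,x) = inf_z (L(s,y;r,z) + L(r,z;t,x))`. -/
theorem val_bellman
    (L0 : ℝ → ℝ) (U : ℝ → ℝ → ℝ)
    (hL0cont : Continuous L0) (hL0conv : ConvexOn ℝ Set.univ L0)
    (hL0sup : ∀ N > (0 : ℝ), ∃ P > (0 : ℝ), ∀ v : ℝ, P < |v| → N * |v| < L0 v)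
    (hUcont : Continuous fun q : ℝ × ℝ => U q.1 q.2)
    (hUbdd : ∃ K : ℝ, ∀ t x : ℝ, |U t x| ≤ K) :
    ∀ s r t x y : ℝ, s < r → r < t →
      val L0 U s y t x = sInf { c | ∃ z : ℝ, c = val L0 U s y r z + val L0 U r z t x } := by
  intro s r t x y hsr hrt
  obtain ⟨m, hm⟩ := aux_L0_lb L0 hL0cont hL0sup
  obtain ⟨K, hK⟩ := hUbdd
  have hst : s < t := hsr.trans hrt
  have hbdd : ∀ s' y' t' x' : ℝ, s' ≤ t' → BddBelow (ASet L0 U s' y' t' x') :=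
    fun s' y' t' x' h => ⟨(m - K) * (t' - s'), fun A hA => aux_action_lb L0 U m K hm hK h hA⟩
  have hne : ∀ s' y' t' x' : ℝ, s' < t' → (ASet L0 U s' y' t' x').Nonempty :=
    fun s' y' t' x' h => aux_nonempty L0 U hUcont h y' x'
  have hvlb : ∀ s' y' t' x' : ℝ, s' < t' → (m - K) * (t' - s') ≤ val L0 U s' y' t' x' :=
    fun s' y' t' x' h => le_csInf (hne s' y' t' x' h)
      (fun A hA => aux_action_lb L0 U m K hm hK h.le hA)
  have hTne : Set.Nonempty { c | ∃ z : ℝ, c = val L0 U s y r z + val L0 U r z t x } :=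
    ⟨_, 0, rfl⟩
  have hTbdd : BddBelow { c | ∃ z : ℝ, c = val L0 U s y r z + val L0 U r z t x } := by
    refine ⟨(m - K) * (r - s) + (m - K) * (t - r), ?_⟩
    rintro c ⟨z, rfl⟩
    exact add_le_add (hvlb s y r z hsr) (hvlb r z t x hrt)
  rw [val_eq_sInf]
  apply le_antisymm
  · refine le_csInf hTne ?_
    rintro c ⟨z, rfl⟩
    rw [val_eq_sInf, val_eq_sInf]
    have key : ∀ a ∈ ASet L0 U s y r z, ∀ b ∈ ASet L0 U r z t x,
        sInf (ASet L0 U s y t x) ≤ a + b := fun a ha b hb =>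
      csInf_le (hbdd s y t x hst.le) (aux_concat L0 U hsr hrt ha hb)
    rw [← sub_le_iff_le_add]
    refine le_csInf (hne s y r z hsr) fun a ha => ?_
    rw [sub_le_iff_le_add, add_comm, ← sub_le_iff_le_add]
    refine le_csInf (hne r z t x hrt) fun b hb => ?_
    rw [sub_le_iff_le_add]
    have := key a ha b hb
    linarith
  · refine le_csInf (hne s y t x hst) fun A hA => ?_
    obtain ⟨z, A1, A2, hA1, hA2, rfl⟩ := aux_split L0 U hsr.le hrt.le hA
    calc sInf { c | ∃ z : ℝ, c = val L0 U s y r z + val L0 U r z t x }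
        ≤ val L0 U s y r z + val L0 U r z t x := csInf_le hTbdd ⟨z, rfl⟩
      _ ≤ A1 + A2 := add_le_add (csInf_le (hbdd s y r z hsr.le) hA1)
          (csInf_le (hbdd r z t x hrt.le) hA2)
end

section
/- For a C¹ convex function L₀ with strictly increasing derivative, the affine trajectory ξ̂(τ) = y·(t−τ)/(t−s) + x·(τ−s)/(t−s) minimizes the functional ξ ↦ ∫ₛᵗ L₀(ξ'(τ)) dτ over absolutely continuous ξ:[s,t] → ℝ with ξ(s) = y, ξ(t) = x, and the minimal value equals (t−s)·L₀((x−y)/(t−s)). -/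
open MeasureTheory

/-- Jensen's inequality for the action of a convex `L₀`. -/
theorem jensen_action
    (L0 : ℝ → ℝ) (s t y x : ℝ) (hst : s < t)
    (hL0 : ContDiff ℝ 1 L0) (hL0conv : ConvexOn ℝ Set.univ L0) :
    ∀ g : ℝ → ℝ,
      IntervalIntegrable g volume s t →
      (∫ τ in s..t, g τ) = x - y →
      IntervalIntegrable (fun τ => L0 (g τ)) volume s t →
      (t - s) * L0 ((x - y) / (t - s)) ≤ ∫ τ in s..t, L0 (g τ) := by
  intro g hgi hgx hLi
  have hts : (0:ℝ) < t - s := by linarith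
  set μ := volume.restrict (Set.Ioc s t) with hμ
  have hμuniv : μ Set.univ = ENNReal.ofReal (t - s) := by
    simp [hμ, Real.volume_Ioc]
  haveI : IsFiniteMeasure μ := by
    constructor; rw [hμuniv]; exact ENNReal.ofReal_lt_top
  haveI : NeZero μ := by
    constructor
    intro h
    rw [h] at hμuniv
    simp at hμuniv
    linarith [hμuniv]
  have hig : Integrable g μ := (intervalIntegrable_iff_integrableOn_Ioc_of_le hst.le).mp hgi
  have hiL : Integrable (L0 ∘ g) μ := (intervalIntegrable_iff_integrableOn_Ioc_of_le hst.le).mp hLi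
  have key := hL0conv.map_average_le hL0.continuous.continuousOn isClosed_univ
    (Filter.Eventually.of_forall fun _ => Set.mem_univ _) hig hiL
  have havg : ⨍ τ, g τ ∂μ = (x - y) / (t - s) := by
    rw [average_eq, measureReal_def, hμuniv, ENNReal.toReal_ofReal hts.le]
    rw [intervalIntegral.integral_of_le hst.le] at hgx
    rw [hgx]; simp [div_eq_inv_mul]
  rw [havg, average_eq, measureReal_def, hμuniv, ENNReal.toReal_ofReal hts.le, smul_eq_mul] at key
  rw [intervalIntegral.integral_of_le hst.le]
  calc (t - s) * L0 ((x - y) / (t - s)) ≤ (t - s) * ((t - s)⁻¹ * ∫ τ, L0 (g τ) ∂μ) :=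
        mul_le_mul_of_nonneg_left key hts.le
    _ = ∫ τ, L0 (g τ) ∂μ := by field_simp

/-- For a C¹ convex `L₀` with strictly increasing derivative, the affine
trajectory `ξ̂(τ) = y(t−τ)/(t−s) + x(τ−s)/(t−s)` minimizes `ξ ↦ ∫ₛᵗ L₀(ξ'(τ)) dτ`
over admissible trajectories from `(s,y)` to `(t,x)`, with minimal value
`(t−s)·L₀((x−y)/(t−s))`. -/
theorem affine_minimizes
    (L0 : ℝ → ℝ) (s t y x : ℝ) (hst : s < t)
    (hL0 : ContDiff ℝ 1 L0) (hL0conv : ConvexOn ℝ Set.univ L0)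
    (hL0mono : StrictMono (deriv L0)) :
    (Admissible s y t x (fun τ => y * (t - τ) / (t - s) + x * (τ - s) / (t - s))
        (fun _ => (x - y) / (t - s)) ∧
      (∫ τ in s..t, L0 ((fun _ : ℝ => (x - y) / (t - s)) τ)) =
        (t - s) * L0 ((x - y) / (t - s))) ∧
    ∀ ξ g : ℝ → ℝ, Admissible s y t x ξ g →
      IntervalIntegrable (fun τ => L0 (g τ)) volume s t →
      (t - s) * L0 ((x - y) / (t - s)) ≤ ∫ τ in s..t, L0 (g τ) := by
  have hts : t - s ≠ 0 := by linarith
  refine ⟨⟨⟨intervalIntegrable_const, ?_, ?_⟩, ?_⟩, ?_⟩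
  · intro r _
    rw [intervalIntegral.integral_const, smul_eq_mul]
    field_simp
    ring
  · field_simp
    ring
  · rw [intervalIntegral.integral_const, smul_eq_mul]
  · intro ξ g ⟨hgi, hξ, hξt⟩ hLi
    have hgx : (∫ τ in s..t, g τ) = x - y := by
      have := hξ t ⟨hst.le, le_refl t⟩
      rw [hξt] at this
      linarith
    exact jensen_action L0 s t y x hst hL0 hL0conv g hgi hgx hLi
end

section
/- Let Hₙ(a) = max_{(y,x)} (−n⁻¹ Lᵃₙ(y,x)). Then the sequence n·Hₙ(a) is approximately superadditive/subadditive: |n·Hₙ(a) − n₀·H_{n₀}(a) − (n−n₀)·H_{n−n₀}(a)| ≤ C*(a) for all 0 < n₀ < n, and consequently Hₙ(a) converges to a limit H(a) with |Hₙ(a) − H(a)| ≤ C*(a)/n. -/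
open MeasureTheory

/-- The reduced `n`-step action `Lᵃₙ(y,x) = min_{k ∈ ℤ} (L(0,y+k;n,x) + a(y+k−x))`. -/
noncomputable def Lan (L0 : ℝ → ℝ) (U : ℝ → ℝ → ℝ) (a : ℝ) (n : ℕ) (y x : ℝ) : ℝ :=
  sInf { c | ∃ k : ℤ, c = val L0 U 0 (y + k) n x + a * (y + k - x) }

/-- `Hₙ(a) = max_{(y,x)} (−n⁻¹ Lᵃₙ(y,x))`. -/
noncomputable def Hn (L0 : ℝ → ℝ) (U : ℝ → ℝ → ℝ) (a : ℝ) (n : ℕ) : ℝ :=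
  sSup { h | ∃ y x : ℝ, h = -(1 / (n : ℝ)) * Lan L0 U a n y x }

namespace HnAux

open Set intervalIntegral

def valSet (L0 : ℝ → ℝ) (U : ℝ → ℝ → ℝ) (s y t x : ℝ) : Set ℝ :=
  { A | ∃ ξ g : ℝ → ℝ, Admissible s y t x ξ g ∧
    IntervalIntegrable (fun τ => L0 (g τ) - U τ (ξ τ)) volume s t ∧
    A = ∫ τ in s..t, (L0 (g τ) - U τ (ξ τ)) }

lemma val_eq (L0 : ℝ → ℝ) (U : ℝ → ℝ → ℝ) (s y t x : ℝ) :
    val L0 U s y t x = sInf (valSet L0 U s y t x) := rfl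

section U

variable {U : ℝ → ℝ → ℝ} (hper : ∀ t x : ℝ, U (t + 1) x = U t x ∧ U t (x + 1) = U t x)

include hper in
lemma U_time_int (k : ℤ) (t x : ℝ) : U (t + k) x = U t x := by
  have hp : Function.Periodic (fun s => U s x) 1 := fun s => (hper s x).1
  simpa using (hp.int_mul k) t

include hper in
lemma U_space_int (k : ℤ) (t x : ℝ) : U t (x + k) = U t x := by
  have hp : Function.Periodic (fun s => U t s) 1 := fun s => (hper t s).2
  simpa using (hp.int_mul k) x

include hper in
lemma U_bound (hUc : Continuous fun q : ℝ × ℝ => U q.1 q.2) :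
    ∃ M : ℝ, 0 ≤ M ∧ ∀ t x : ℝ, |U t x| ≤ M := by
  obtain ⟨C, hC⟩ : ∃ C, ∀ q ∈ (Set.Icc (0:ℝ) 1 ×ˢ Set.Icc (0:ℝ) 1), ‖U q.1 q.2‖ ≤ C := by
    rcases (isCompact_Icc.prod isCompact_Icc).exists_bound_of_continuousOn
      hUc.continuousOn with ⟨C, hC⟩
    exact ⟨C, hC⟩
  refine ⟨max C 0, le_max_right _ _, fun t x => ?_⟩
  have h1 : U t x = U (Int.fract t) (Int.fract x) := by
    have e1 : U t x = U (Int.fract t) x := by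
      conv_lhs => rw [show t = Int.fract t + (⌊t⌋ : ℤ) by exact (Int.fract_add_floor t).symm]
      exact U_time_int hper ⌊t⌋ _ _
    have e2 : U (Int.fract t) x = U (Int.fract t) (Int.fract x) := by
      conv_lhs => rw [show x = Int.fract x + (⌊x⌋ : ℤ) by exact (Int.fract_add_floor x).symm]
      exact U_space_int hper ⌊x⌋ _ _
    rw [e1, e2]
  rw [h1]
  have := hC (Int.fract t, Int.fract x)
    ⟨⟨Int.fract_nonneg t, (Int.fract_lt_one t).le⟩, ⟨Int.fract_nonneg x, (Int.fract_lt_one x).le⟩⟩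
  exact le_max_of_le_left (by simpa using this)

end U
section L0

variable {H0 L0 : ℝ → ℝ}
  (hH0c : Continuous H0)
  (hsup : ∀ N > (0 : ℝ), ∃ P > (0 : ℝ), ∀ p : ℝ, P < |p| → N * |p| < H0 p)
  (hL0 : ∀ v : ℝ, L0 v = sSup (Set.range fun p : ℝ => p * v - H0 p))

include hH0c hsup in
lemma L0_bddAbove (v : ℝ) : BddAbove (Set.range fun p : ℝ => p * v - H0 p) := by
  obtain ⟨P, hP, hPb⟩ := hsup (|v| + 1) (by positivity)
  obtain ⟨C, hC⟩ := (isCompact_Icc (a := -P) (b := P)).exists_bound_of_continuousOn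
    ((continuous_id.mul continuous_const).sub hH0c).continuousOn
  refine ⟨max C 0, ?_⟩
  rintro _ ⟨p, rfl⟩
  by_cases hp : |p| ≤ P
  · exact le_max_of_le_left (le_trans (le_abs_self _) (hC p (abs_le.mp hp)))
  · push_neg at hp
    have h1 : p * v - H0 p < p * v - (|v| + 1) * |p| := by
      have := hPb p hp
      linarith
    have h2 : p * v ≤ |p| * |v| := le_trans (le_abs_self _) (by rw [abs_mul])
    refine le_max_of_le_right (le_of_lt (lt_of_lt_of_le h1 ?_))
    nlinarith [abs_nonneg p, abs_nonneg v, hP.trans hp]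

include hH0c hsup hL0 in
lemma L0_ge (p v : ℝ) : p * v - H0 p ≤ L0 v := by
  rw [hL0]
  exact le_csSup (L0_bddAbove hH0c hsup v) ⟨p, rfl⟩

end L0

section Val

variable {H0 L0 : ℝ → ℝ} {U : ℝ → ℝ → ℝ}
  (hH0c : Continuous H0)
  (hsup : ∀ N > (0 : ℝ), ∃ P > (0 : ℝ), ∀ p : ℝ, P < |p| → N * |p| < H0 p)
  (hL0 : ∀ v : ℝ, L0 v = sSup (Set.range fun p : ℝ => p * v - H0 p))
  (hUc : Continuous fun q : ℝ × ℝ => U q.1 q.2)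
  {M : ℝ} (hM : ∀ t x : ℝ, |U t x| ≤ M)

include hUc in
lemma valSet_nonempty {s t : ℝ} (hst : s < t) (y x : ℝ) :
    (valSet L0 U s y t x).Nonempty := by
  set v : ℝ := (x - y) / (t - s) with hv
  refine ⟨_, fun τ => y + (τ - s) * v, fun _ => v, ⟨intervalIntegrable_const, ?_, ?_⟩, ?_, rfl⟩
  · intro r _
    rw [intervalIntegral.integral_const, smul_eq_mul]
  · show y + (t - s) * v = x
    rw [hv, mul_comm, div_mul_cancel₀ _ (by linarith : t - s ≠ 0)]
    ring
  · have hξ : Continuous fun τ : ℝ => y + (τ - s) * v := by continuity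
    exact (Continuous.intervalIntegrable (by
      exact continuous_const.sub (hUc.comp (continuous_id.prodMk hξ))) _ _)

include hUc in
lemma U_comp_integrable {s t : ℝ} (hst : s ≤ t) {y : ℝ} {ξ g : ℝ → ℝ}
    (hg : IntervalIntegrable g volume s t)
    (hξ : ∀ r ∈ Set.Icc s t, ξ r = y + ∫ τ in s..r, g τ) :
    IntervalIntegrable (fun τ => U τ (ξ τ)) volume s t := by
  set φ : ℝ → ℝ := fun τ => U τ (y + ∫ τ' in s..τ, g τ') with hφ
  have hprim : ContinuousOn (fun τ => ∫ τ' in s..τ, g τ') (Set.uIcc s t) :=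
    intervalIntegral.continuousOn_primitive_interval' hg (by
      rw [Set.uIcc_of_le hst]; exact ⟨le_rfl, hst⟩)
  have hφc : ContinuousOn φ (Set.uIcc s t) := by
    exact hUc.comp_continuousOn
      (continuousOn_id.prodMk (continuousOn_const.add hprim))
  have hφi : IntervalIntegrable φ volume s t := hφc.intervalIntegrable
  rw [intervalIntegrable_iff] at hφi ⊢
  apply hφi.congr_fun _ measurableSet_uIoc
  intro τ hτ
  rw [Set.uIoc_of_le hst] at hτ
  have : ξ τ = y + ∫ τ' in s..τ, g τ' := hξ τ ⟨hτ.1.le, hτ.2⟩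
  simp [hφ, this]

include hH0c hsup hL0 hUc hM in
lemma action_ge {s t y x A : ℝ} (hst : s ≤ t) (hA : A ∈ valSet L0 U s y t x) (p : ℝ) :
    p * (x - y) - (t - s) * H0 p - (t - s) * M ≤ A := by
  obtain ⟨ξ, g, ⟨hg, hξ, hξt⟩, hF, rfl⟩ := hA
  have hUi : IntervalIntegrable (fun τ => U τ (ξ τ)) volume s t :=
    U_comp_integrable hUc hst hg hξ
  have hL0g : IntervalIntegrable (fun τ => L0 (g τ)) volume s t := by
    have := hF.add hUi
    simpa using this
  have hgint : ∫ τ in s..t, g τ = x - y := by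
    have := hξ t ⟨hst, le_rfl⟩
    rw [hξt] at this
    linarith
  have h1 : p * (x - y) - (t - s) * H0 p ≤ ∫ τ in s..t, L0 (g τ) := by
    have hlow : IntervalIntegrable (fun τ => p * g τ - H0 p) volume s t :=
      (hg.const_mul p).sub intervalIntegrable_const
    have := intervalIntegral.integral_mono_on hst hlow hL0g
      (fun τ _ => L0_ge hH0c hsup hL0 p (g τ))
    calc p * (x - y) - (t - s) * H0 p
        = ∫ τ in s..t, (p * g τ - H0 p) := by
          rw [intervalIntegral.integral_sub (hg.const_mul p) intervalIntegrable_const,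
            intervalIntegral.integral_const_mul, hgint, intervalIntegral.integral_const,
            smul_eq_mul]
      _ ≤ _ := this
  have h2 : |∫ τ in s..t, U τ (ξ τ)| ≤ (t - s) * M := by
    have := intervalIntegral.norm_integral_le_of_norm_le_const
      (C := M) (f := fun τ => U τ (ξ τ)) (a := s) (b := t) (fun τ _ => by
        simpa using hM τ (ξ τ))
    rw [Real.norm_eq_abs] at this
    calc |∫ τ in s..t, U τ (ξ τ)| ≤ M * |t - s| := this
      _ = (t - s) * M := by rw [abs_of_nonneg (by linarith), mul_comm]
  rw [intervalIntegral.integral_sub hL0g hUi]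
  have := abs_le.mp h2
  linarith

include hH0c hsup hL0 hUc hM in
lemma val_ge {s t : ℝ} (hst : s < t) (y x : ℝ) (p : ℝ) :
    p * (x - y) - (t - s) * H0 p - (t - s) * M ≤ val L0 U s y t x := by
  rw [val_eq]
  exact le_csInf (valSet_nonempty hUc hst y x)
    (fun A hA => action_ge hH0c hsup hL0 hUc hM hst.le hA p)

include hH0c hsup hL0 hUc hM in
lemma valSet_bddBelow {s t : ℝ} (hst : s ≤ t) (y x : ℝ) :
    BddBelow (valSet L0 U s y t x) :=
  ⟨0 * (x - y) - (t - s) * H0 0 - (t - s) * M,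
    fun A hA => action_ge hH0c hsup hL0 hUc hM hst hA 0⟩

include hH0c hsup hL0 hUc hM in
lemma val_le {s t y x A : ℝ} (hst : s ≤ t) (hA : A ∈ valSet L0 U s y t x) :
    val L0 U s y t x ≤ A := by
  rw [val_eq]
  exact csInf_le (valSet_bddBelow hH0c hsup hL0 hUc hM hst y x) hA

end Val

section Shift

variable {L0 : ℝ → ℝ} {U : ℝ → ℝ → ℝ}

lemma valSet_time_shift_mem {c : ℝ} (hc : ∀ t x : ℝ, U (t + c) x = U t x)
    {s y t x A : ℝ} (hA : A ∈ valSet L0 U s y t x) :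
    A ∈ valSet L0 U (s + c) y (t + c) x := by
  obtain ⟨ξ, g, ⟨hg, hξ, hξt⟩, hF, rfl⟩ := hA
  have hUshift : ∀ (τ z : ℝ), U τ z = U (τ - c) z := fun τ z => by
    conv_lhs => rw [show τ = τ - c + c by ring, hc]
  refine ⟨fun τ => ξ (τ - c), fun τ => g (τ - c), ⟨hg.comp_sub_right c, ?_, by simpa using hξt⟩,
    ?_, ?_⟩
  · intro r hr
    have hrc : r - c ∈ Set.Icc s t := ⟨by linarith [hr.1], by linarith [hr.2]⟩
    show ξ (r - c) = y + ∫ τ in (s + c)..r, g (τ - c)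
    rw [intervalIntegral.integral_comp_sub_right, show s + c - c = s by ring]
    exact hξ _ hrc
  · have := hF.comp_sub_right c
    apply IntervalIntegrable.congr_ae this
    apply Filter.EventuallyEq.restrict
    apply Filter.Eventually.of_forall
    intro τ
    simp only []
    rw [hUshift τ (ξ (τ - c))]
  · have hfun : (fun τ => L0 (g (τ - c)) - U τ (ξ (τ - c)))
        = fun τ => (fun τ' => L0 (g τ') - U τ' (ξ τ')) (τ - c) := funext fun τ => by
      show L0 (g (τ - c)) - U τ (ξ (τ - c)) = L0 (g (τ - c)) - U (τ - c) (ξ (τ - c))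
      rw [hUshift τ (ξ (τ - c))]
    symm
    beta_reduce
    rw [hfun]
    have h2 := intervalIntegral.integral_comp_sub_right
      (a := s + c) (b := t + c) (fun τ' => L0 (g τ') - U τ' (ξ τ')) c
    rw [show s + c - c = s by ring, show t + c - c = t by ring] at h2
    exact h2

lemma valSet_time_shift {c : ℝ} (hc : ∀ t x : ℝ, U (t + c) x = U t x) (s y t x : ℝ) :
    valSet L0 U (s + c) y (t + c) x = valSet L0 U s y t x := by
  have hc' : ∀ t x : ℝ, U (t + -c) x = U t x := fun t x => by
    have := hc (t - c) x
    rw [show t - c + c = t by ring] at this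
    rw [show t + -c = t - c by ring, this]
  ext A
  constructor
  · intro hA
    have := valSet_time_shift_mem hc' hA
    simpa [show s + c + -c = s by ring, show t + c + -c = t by ring] using this
  · exact valSet_time_shift_mem hc

lemma val_time_shift {c : ℝ} (hc : ∀ t x : ℝ, U (t + c) x = U t x) (s y t x : ℝ) :
    val L0 U (s + c) y (t + c) x = val L0 U s y t x := by
  rw [val_eq, val_eq, valSet_time_shift hc]

lemma valSet_space_shift_mem {c : ℝ} (hc : ∀ t x : ℝ, U t (x + c) = U t x)
    {s y t x A : ℝ} (hA : A ∈ valSet L0 U s y t x) :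
    A ∈ valSet L0 U s (y + c) t (x + c) := by
  obtain ⟨ξ, g, ⟨hg, hξ, hξt⟩, hF, rfl⟩ := hA
  have key : (fun τ => L0 (g τ) - U τ (ξ τ + c)) = fun τ => L0 (g τ) - U τ (ξ τ) :=
    funext fun τ => by rw [hc]
  refine ⟨fun τ => ξ τ + c, g, ⟨hg, fun r hr => ?_, ?_⟩, by rw [key]; exact hF, by rw [key]⟩
  · show ξ r + c = y + c + ∫ τ in s..r, g τ
    rw [hξ r hr]; ring
  · show ξ t + c = x + c
    rw [hξt]

lemma valSet_space_shift {c : ℝ} (hc : ∀ t x : ℝ, U t (x + c) = U t x) (s y t x : ℝ) :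
    valSet L0 U s (y + c) t (x + c) = valSet L0 U s y t x := by
  have hc' : ∀ t x : ℝ, U t (x + -c) = U t x := fun t x => by
    have := hc t (x - c)
    rw [show x - c + c = x by ring] at this
    rw [show x + -c = x - c by ring, this]
  ext A
  constructor
  · intro hA
    have := valSet_space_shift_mem hc' hA
    simpa [show y + c + -c = y by ring, show x + c + -c = x by ring] using this
  · exact valSet_space_shift_mem hc

lemma val_space_shift {c : ℝ} (hc : ∀ t x : ℝ, U t (x + c) = U t x) (s y t x : ℝ) :
    val L0 U s (y + c) t (x + c) = val L0 U s y t x := by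
  rw [val_eq, val_eq, valSet_space_shift hc]

end Shift

section SplitGlue

variable {H0 L0 : ℝ → ℝ} {U : ℝ → ℝ → ℝ}
  (hH0c : Continuous H0)
  (hsup : ∀ N > (0 : ℝ), ∃ P > (0 : ℝ), ∀ p : ℝ, P < |p| → N * |p| < H0 p)
  (hL0 : ∀ v : ℝ, L0 v = sSup (Set.range fun p : ℝ => p * v - H0 p))
  (hUc : Continuous fun q : ℝ × ℝ => U q.1 q.2)
  {M : ℝ} (hM : ∀ t x : ℝ, |U t x| ≤ M)

include hH0c hsup hL0 hUc hM in
lemma val_split {s m t y x A : ℝ} (hsm : s ≤ m) (hmt : m ≤ t)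
    (hA : A ∈ valSet L0 U s y t x) :
    ∃ z : ℝ, val L0 U s y m z + val L0 U m z t x ≤ A := by
  obtain ⟨ξ, g, ⟨hg, hξ, hξt⟩, hF, rfl⟩ := hA
  have hst : s ≤ t := hsm.trans hmt
  have hsub1 : Set.uIcc s m ⊆ Set.uIcc s t :=
    Set.uIcc_subset_uIcc left_mem_uIcc (by rw [Set.uIcc_of_le hst]; exact ⟨hsm, hmt⟩)
  have hsub2 : Set.uIcc m t ⊆ Set.uIcc s t :=
    Set.uIcc_subset_uIcc (by rw [Set.uIcc_of_le hst]; exact ⟨hsm, hmt⟩) right_mem_uIcc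
  have hg1 := hg.mono_set hsub1
  have hg2 := hg.mono_set hsub2
  have hF1 := hF.mono_set hsub1
  have hF2 := hF.mono_set hsub2
  refine ⟨ξ m, ?_⟩
  have hadd : (∫ τ in s..m, (L0 (g τ) - U τ (ξ τ))) + (∫ τ in m..t, (L0 (g τ) - U τ (ξ τ)))
      = ∫ τ in s..t, (L0 (g τ) - U τ (ξ τ)) :=
    intervalIntegral.integral_add_adjacent_intervals hF1 hF2
  have hmem1 : (∫ τ in s..m, (L0 (g τ) - U τ (ξ τ))) ∈ valSet L0 U s y m (ξ m) :=
    ⟨ξ, g, ⟨hg1, fun r hr => hξ r ⟨hr.1, hr.2.trans hmt⟩, rfl⟩, hF1, rfl⟩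
  have hmem2 : (∫ τ in m..t, (L0 (g τ) - U τ (ξ τ))) ∈ valSet L0 U m (ξ m) t x := by
    refine ⟨ξ, g, ⟨hg2, fun r hr => ?_, hξt⟩, hF2, rfl⟩
    have h1 : ξ r = y + ∫ τ in s..r, g τ := hξ r ⟨hsm.trans hr.1, hr.2⟩
    have h2 : ξ m = y + ∫ τ in s..m, g τ := hξ m ⟨hsm, hmt⟩
    have h3 : (∫ τ in s..m, g τ) + ∫ τ in m..r, g τ = ∫ τ in s..r, g τ :=
      intervalIntegral.integral_add_adjacent_intervals hg1 (hg2.mono_set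
        (Set.uIcc_subset_uIcc left_mem_uIcc
          (by rw [Set.uIcc_of_le hmt]; exact ⟨hr.1, hr.2⟩)))
    rw [h1, h2, ← h3]; ring
  have hv1 := val_le hH0c hsup hL0 hUc hM hsm hmem1
  have hv2 := val_le hH0c hsup hL0 hUc hM hmt hmem2
  linarith

include hH0c hsup hL0 hUc hM in
lemma val_glue {s m t : ℝ} (y z x : ℝ) (hsm : s < m) (hmt : m < t) :
    val L0 U s y t x ≤ val L0 U s y m z + val L0 U m z t x := by
  refine le_of_forall_pos_le_add (fun ε hε => ?_)
  have hε2 : 0 < ε / 2 := by linarith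
  obtain ⟨A₁, hA₁mem, hA₁⟩ : ∃ A₁ ∈ valSet L0 U s y m z, A₁ < val L0 U s y m z + ε / 2 := by
    have := exists_lt_of_csInf_lt (valSet_nonempty hUc hsm y z)
      (show sInf (valSet L0 U s y m z) < val L0 U s y m z + ε / 2 by
        rw [← val_eq]; linarith)
    tauto
  obtain ⟨A₂, hA₂mem, hA₂⟩ : ∃ A₂ ∈ valSet L0 U m z t x, A₂ < val L0 U m z t x + ε / 2 := by
    have := exists_lt_of_csInf_lt (valSet_nonempty hUc hmt z x)
      (show sInf (valSet L0 U m z t x) < val L0 U m z t x + ε / 2 by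
        rw [← val_eq]; linarith)
    tauto
  obtain ⟨ξ₁, g₁, ⟨hg₁, hξ₁, hξ₁m⟩, hF₁, hA₁eq⟩ := hA₁mem
  obtain ⟨ξ₂, g₂, ⟨hg₂, hξ₂, hξ₂t⟩, hF₂, hA₂eq⟩ := hA₂mem
  set g : ℝ → ℝ := fun τ => if τ ≤ m then g₁ τ else g₂ τ with hgdef
  set ξ : ℝ → ℝ := fun τ => y + ∫ τ' in s..τ, g τ' with hξdef
  have hgeq1 : Set.EqOn g g₁ (Set.uIcc s m) := fun τ hτ => by
    rw [Set.uIcc_of_le hsm.le] at hτ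
    simp only [hgdef, if_pos hτ.2]
  have hgeq2 : Set.EqOn g g₂ (Set.Ioc m t) := fun τ hτ => by
    simp only [hgdef, if_neg (not_le.mpr hτ.1)]
  have hgm : IntervalIntegrable g volume s m := by
    rw [intervalIntegrable_iff] at hg₁ ⊢
    exact hg₁.congr_fun (fun τ hτ => (hgeq1 (Set.uIoc_subset_uIcc hτ)).symm) measurableSet_uIoc
  have hgt : IntervalIntegrable g volume m t := by
    rw [intervalIntegrable_iff] at hg₂ ⊢
    rw [Set.uIoc_of_le hmt.le] at hg₂ ⊢
    exact hg₂.congr_fun (fun τ hτ => (hgeq2 hτ).symm) measurableSet_Ioc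
  have hg : IntervalIntegrable g volume s t := hgm.trans hgt
  have hξeq1 : ∀ τ ∈ Set.Icc s m, ξ τ = ξ₁ τ := by
    intro τ hτ
    have : (∫ τ' in s..τ, g τ') = ∫ τ' in s..τ, g₁ τ' :=
      intervalIntegral.integral_congr (fun τ' hτ' => hgeq1
        (Set.uIcc_subset_uIcc left_mem_uIcc
          (by rw [Set.uIcc_of_le hsm.le]; exact hτ) hτ'))
    rw [hξdef]; simp only []
    rw [this, ← hξ₁ τ hτ]
  have hzm : ξ m = z := by rw [hξeq1 m ⟨hsm.le, le_rfl⟩, hξ₁m]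
  have hξeq2 : ∀ τ ∈ Set.Icc m t, ξ τ = ξ₂ τ := by
    intro τ hτ
    have hsplit : (∫ τ' in s..m, g τ') + ∫ τ' in m..τ, g τ' = ∫ τ' in s..τ, g τ' :=
      intervalIntegral.integral_add_adjacent_intervals hgm
        (hgt.mono_set (Set.uIcc_subset_uIcc left_mem_uIcc
          (by rw [Set.uIcc_of_le hmt.le]; exact hτ)))
    have h2 : (∫ τ' in m..τ, g τ') = ∫ τ' in m..τ, g₂ τ' :=
      intervalIntegral.integral_congr_ae (by
        apply Filter.Eventually.of_forall
        intro τ' hτ'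
        rw [Set.uIoc_of_le hτ.1] at hτ'
        exact hgeq2 ⟨hτ'.1, hτ'.2.trans hτ.2⟩)
    have hξm' : ξ m = y + ∫ τ' in s..m, g τ' := rfl
    have : ξ τ = y + ∫ τ' in s..τ, g τ' := rfl
    rw [this, ← hsplit, h2]
    have := hξ₂ τ hτ
    rw [this]
    have : z = y + ∫ τ' in s..m, g τ' := by rw [← hξm', hzm]
    rw [this]; ring
  have hadm : Admissible s y t x ξ g :=
    ⟨hg, fun r _ => rfl, by rw [hξeq2 t ⟨hmt.le, le_rfl⟩, hξ₂t]⟩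
  set F : ℝ → ℝ := fun τ => L0 (g τ) - U τ (ξ τ) with hFdef
  have hFeq1 : Set.EqOn F (fun τ => L0 (g₁ τ) - U τ (ξ₁ τ)) (Set.Icc s m) := by
    intro τ hτ
    simp only [hFdef]
    rw [hgeq1 (by rw [Set.uIcc_of_le hsm.le]; exact hτ), hξeq1 τ hτ]
  have hFeq2 : Set.EqOn F (fun τ => L0 (g₂ τ) - U τ (ξ₂ τ)) (Set.Ioc m t) := by
    intro τ hτ
    simp only [hFdef]
    rw [hgeq2 hτ, hξeq2 τ ⟨hτ.1.le, hτ.2⟩]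
  have hFm : IntervalIntegrable F volume s m := by
    rw [intervalIntegrable_iff] at hF₁ ⊢
    rw [Set.uIoc_of_le hsm.le] at hF₁ ⊢
    exact hF₁.congr_fun
      (fun τ hτ => (hFeq1 (Set.Ioc_subset_Icc_self hτ)).symm) measurableSet_Ioc
  have hFt : IntervalIntegrable F volume m t := by
    rw [intervalIntegrable_iff] at hF₂ ⊢
    rw [Set.uIoc_of_le hmt.le] at hF₂ ⊢
    exact hF₂.congr_fun (fun τ hτ => (hFeq2 hτ).symm) measurableSet_Ioc
  have hF : IntervalIntegrable F volume s t := hFm.trans hFt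
  have hint1 : (∫ τ in s..m, F τ) = A₁ := by
    rw [hA₁eq]
    exact intervalIntegral.integral_congr (fun τ hτ =>
      hFeq1 (by rw [Set.uIcc_of_le hsm.le] at hτ; exact hτ))
  have hint2 : (∫ τ in m..t, F τ) = A₂ := by
    rw [hA₂eq]
    exact intervalIntegral.integral_congr_ae (by
      apply Filter.Eventually.of_forall
      intro τ hτ
      rw [Set.uIoc_of_le hmt.le] at hτ
      exact hFeq2 hτ)
  have hAmem : (∫ τ in s..t, F τ) ∈ valSet L0 U s y t x := ⟨ξ, g, hadm, hF, rfl⟩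
  have hle := val_le hH0c hsup hL0 hUc hM (hsm.le.trans hmt.le) hAmem
  have hsum : (∫ τ in s..t, F τ) = A₁ + A₂ := by
    rw [← hint1, ← hint2]
    exact (intervalIntegral.integral_add_adjacent_intervals hFm hFt).symm
  linarith

end SplitGlue

section Lan

variable {H0 L0 : ℝ → ℝ} {U : ℝ → ℝ → ℝ} {a : ℝ}
  (hH0c : Continuous H0)
  (hsup : ∀ N > (0 : ℝ), ∃ P > (0 : ℝ), ∀ p : ℝ, P < |p| → N * |p| < H0 p)
  (hL0 : ∀ v : ℝ, L0 v = sSup (Set.range fun p : ℝ => p * v - H0 p))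
  (hUc : Continuous fun q : ℝ × ℝ => U q.1 q.2)
  (hper : ∀ t x : ℝ, U (t + 1) x = U t x ∧ U t (x + 1) = U t x)
  {M : ℝ} (hM : ∀ t x : ℝ, |U t x| ≤ M)

def LanSet (L0 : ℝ → ℝ) (U : ℝ → ℝ → ℝ) (a : ℝ) (n : ℕ) (y x : ℝ) : Set ℝ :=
  { c | ∃ k : ℤ, c = val L0 U 0 (y + k) n x + a * (y + k - x) }

lemma Lan_eq (n : ℕ) (y x : ℝ) : Lan L0 U a n y x = sInf (LanSet L0 U a n y x) := rfl

lemma LanSet_nonempty (n : ℕ) (y x : ℝ) : (LanSet L0 U a n y x).Nonempty := ⟨_, 0, rfl⟩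

include hH0c hsup hL0 hUc hM in
lemma LanSet_mem_ge {n : ℕ} (hn : 0 < n) {y x c : ℝ} (hc : c ∈ LanSet L0 U a n y x) :
    -(n : ℝ) * (H0 a + M) ≤ c := by
  obtain ⟨k, rfl⟩ := hc
  have h := val_ge hH0c hsup hL0 hUc hM
    (show (0:ℝ) < (n:ℝ) by exact_mod_cast hn) (y + (k:ℝ)) x a
  have e : a * (x - (y + (k:ℝ))) + a * (y + (k:ℝ) - x) = 0 := by ring
  have hn' : (0:ℝ) ≤ (n:ℝ) := by positivity
  nlinarith [h]

include hH0c hsup hL0 hUc hM in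
lemma Lan_bddBelow {n : ℕ} (hn : 0 < n) (y x : ℝ) : BddBelow (LanSet L0 U a n y x) :=
  ⟨-(n : ℝ) * (H0 a + M), fun c hc => LanSet_mem_ge hH0c hsup hL0 hUc hM hn hc⟩

include hH0c hsup hL0 hUc hM in
lemma Lan_ge {n : ℕ} (hn : 0 < n) (y x : ℝ) :
    -(n : ℝ) * (H0 a + M) ≤ Lan L0 U a n y x :=
  le_csInf (LanSet_nonempty n y x) (fun c hc => LanSet_mem_ge hH0c hsup hL0 hUc hM hn hc)

include hH0c hsup hL0 hUc hM in
lemma Lan_le {n : ℕ} (hn : 0 < n) {y x c : ℝ} (hc : c ∈ LanSet L0 U a n y x) :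
    Lan L0 U a n y x ≤ c :=
  csInf_le (Lan_bddBelow hH0c hsup hL0 hUc hM hn y x) hc

lemma Lan_exists_lt (n : ℕ) (y x : ℝ) {ε : ℝ} (hε : 0 < ε) :
    ∃ k : ℤ, val L0 U 0 (y + k) n x + a * (y + k - x) < Lan L0 U a n y x + ε := by
  obtain ⟨c, ⟨k, rfl⟩, hlt⟩ := exists_lt_of_csInf_lt (LanSet_nonempty n y x)
    (show sInf (LanSet L0 U a n y x) < Lan L0 U a n y x + ε by rw [← Lan_eq]; linarith)
  exact ⟨k, hlt⟩

include hper in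
lemma Lan_shift (n : ℕ) (y x : ℝ) (m : ℤ) :
    Lan L0 U a n (y + (m:ℝ)) (x + (m:ℝ)) = Lan L0 U a n y x := by
  have hc : ∀ t x : ℝ, U t (x + (m:ℝ)) = U t x := fun t x => U_space_int hper m t x
  have key : ∀ k : ℤ, val L0 U 0 (y + (m:ℝ) + (k:ℝ)) n (x + (m:ℝ)) = val L0 U 0 (y + (k:ℝ)) n x :=
    fun k => by
      rw [show y + (m:ℝ) + (k:ℝ) = y + (k:ℝ) + (m:ℝ) by ring]
      exact val_space_shift hc 0 (y + (k:ℝ)) n x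
  rw [Lan_eq, Lan_eq]
  congr 1
  ext c
  constructor
  · rintro ⟨k, rfl⟩
    exact ⟨k, by rw [key k]; ring_nf⟩
  · rintro ⟨k, rfl⟩
    exact ⟨k, by rw [key k]; ring_nf⟩

include hH0c hsup hL0 hUc hper hM in
lemma Lan_chain {n₀ n' : ℕ} (hn₀ : 0 < n₀) (hn' : 0 < n') (y z x : ℝ) :
    Lan L0 U a (n₀ + n') y x ≤ Lan L0 U a n₀ y z + Lan L0 U a n' z x := by
  refine le_of_forall_pos_le_add (fun ε hε => ?_)
  have hε2 : 0 < ε / 2 := by linarith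
  obtain ⟨k, hk⟩ := Lan_exists_lt (L0 := L0) (U := U) (a := a) n₀ y z hε2
  obtain ⟨j, hj⟩ := Lan_exists_lt (L0 := L0) (U := U) (a := a) n' z x hε2
  have htime : ∀ t x : ℝ, U (t + ((n₀ : ℕ) : ℝ)) x = U t x := fun t x => by
    have := U_time_int hper (n₀ : ℤ) t x
    simpa using this
  have h1 : val L0 U 0 (y + (k:ℝ) + (j:ℝ)) n₀ (z + (j:ℝ)) = val L0 U 0 (y + (k:ℝ)) n₀ z :=
    val_space_shift (fun t x => U_space_int hper j t x) 0 (y + (k:ℝ)) n₀ z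
  have h2 : val L0 U ((n₀:ℕ):ℝ) (z + (j:ℝ)) ((n₀ + n' : ℕ):ℝ) x = val L0 U 0 (z + (j:ℝ)) n' x := by
    have := val_time_shift (L0 := L0) htime 0 (z + (j:ℝ)) ((n':ℕ):ℝ) x
    rw [zero_add] at this
    rw [show ((n₀ + n' : ℕ):ℝ) = ((n':ℕ):ℝ) + ((n₀:ℕ):ℝ) by push_cast; ring]
    exact this
  have h3 : val L0 U 0 (y + (k:ℝ) + (j:ℝ)) ((n₀ + n' : ℕ):ℝ) x ≤
      val L0 U 0 (y + (k:ℝ) + (j:ℝ)) ((n₀:ℕ):ℝ) (z + (j:ℝ)) +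
      val L0 U ((n₀:ℕ):ℝ) (z + (j:ℝ)) ((n₀ + n' : ℕ):ℝ) x :=
    val_glue hH0c hsup hL0 hUc hM _ _ _ (by exact_mod_cast hn₀)
      (by exact_mod_cast Nat.lt_add_of_pos_right hn')
  have h4 : Lan L0 U a (n₀ + n') y x ≤
      val L0 U 0 (y + ((k + j : ℤ):ℝ)) ((n₀ + n' : ℕ):ℝ) x + a * (y + ((k + j : ℤ):ℝ) - x) :=
    Lan_le hH0c hsup hL0 hUc hM (by positivity) ⟨k + j, rfl⟩
  have hcast : ((k + j : ℤ):ℝ) = (k:ℝ) + (j:ℝ) := by push_cast; ring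
  rw [hcast] at h4
  have haterm : a * (y + ((k:ℝ) + (j:ℝ)) - x) =
      a * (y + (k:ℝ) - z) + a * (z + (j:ℝ) - x) := by ring
  have h5 : val L0 U 0 (y + ((k:ℝ) + (j:ℝ))) ((n₀ + n' : ℕ):ℝ) x =
      val L0 U 0 (y + (k:ℝ) + (j:ℝ)) ((n₀ + n' : ℕ):ℝ) x := by rw [add_assoc]
  rw [h5, haterm] at h4
  rw [h1] at h3
  rw [h2] at h3
  linarith

include hH0c hsup hL0 hUc hper hM in
lemma Lan_split {n₀ n' : ℕ} (hn₀ : 0 < n₀) (hn' : 0 < n') (y x : ℝ) {ε : ℝ} (hε : 0 < ε) :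
    ∃ z : ℝ, Lan L0 U a n₀ y z + Lan L0 U a n' z x ≤ Lan L0 U a (n₀ + n') y x + ε := by
  have hε2 : 0 < ε / 2 := by linarith
  obtain ⟨k, hk⟩ := Lan_exists_lt (L0 := L0) (U := U) (a := a) (n₀ + n') y x hε2
  obtain ⟨A, hAmem, hA⟩ : ∃ A ∈ valSet L0 U 0 (y + (k:ℝ)) ((n₀ + n' : ℕ):ℝ) x,
      A < val L0 U 0 (y + (k:ℝ)) ((n₀ + n' : ℕ):ℝ) x + ε / 2 := by
    have := exists_lt_of_csInf_lt
      (valSet_nonempty hUc (show (0:ℝ) < ((n₀ + n' : ℕ):ℝ) by positivity) (y + (k:ℝ)) x)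
      (show sInf (valSet L0 U 0 (y + (k:ℝ)) ((n₀ + n' : ℕ):ℝ) x) <
        val L0 U 0 (y + (k:ℝ)) ((n₀ + n' : ℕ):ℝ) x + ε / 2 by rw [← val_eq]; linarith)
    tauto
  obtain ⟨z, hz⟩ := val_split hH0c hsup hL0 hUc hM
    (show (0:ℝ) ≤ ((n₀:ℕ):ℝ) by positivity)
    (show ((n₀:ℕ):ℝ) ≤ ((n₀ + n' : ℕ):ℝ) by exact_mod_cast Nat.le_add_right n₀ n')
    hAmem
  have htime : ∀ t x : ℝ, U (t + ((n₀ : ℕ) : ℝ)) x = U t x := fun t x => by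
    have := U_time_int hper (n₀ : ℤ) t x
    simpa using this
  have h2 : val L0 U ((n₀:ℕ):ℝ) z ((n₀ + n' : ℕ):ℝ) x = val L0 U 0 z n' x := by
    have := val_time_shift (L0 := L0) htime 0 z ((n':ℕ):ℝ) x
    rw [zero_add] at this
    rw [show ((n₀ + n' : ℕ):ℝ) = ((n':ℕ):ℝ) + ((n₀:ℕ):ℝ) by push_cast; ring]
    exact this
  refine ⟨z, ?_⟩
  have h3 : Lan L0 U a n₀ y z ≤ val L0 U 0 (y + (k:ℝ)) n₀ z + a * (y + (k:ℝ) - z) :=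
    Lan_le hH0c hsup hL0 hUc hM hn₀ ⟨k, rfl⟩
  have h4 : Lan L0 U a n' z x ≤ val L0 U 0 (z + ((0:ℤ):ℝ)) n' x + a * (z + ((0:ℤ):ℝ) - x) :=
    Lan_le hH0c hsup hL0 hUc hM hn' ⟨0, rfl⟩
  simp only [Int.cast_zero, add_zero] at h4
  have haterm : a * (y + (k:ℝ) - x) = a * (y + (k:ℝ) - z) + a * (z - x) := by ring
  rw [h2] at hz
  linarith

end Lan

section J

variable {H0 L0 : ℝ → ℝ} {U : ℝ → ℝ → ℝ} {a : ℝ}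
  (hH0c : Continuous H0)
  (hsup : ∀ N > (0 : ℝ), ∃ P > (0 : ℝ), ∀ p : ℝ, P < |p| → N * |p| < H0 p)
  (hL0 : ∀ v : ℝ, L0 v = sSup (Set.range fun p : ℝ => p * v - H0 p))
  (hUc : Continuous fun q : ℝ × ℝ => U q.1 q.2)
  (hper : ∀ t x : ℝ, U (t + 1) x = U t x ∧ U t (x + 1) = U t x)
  {M : ℝ} (hM : ∀ t x : ℝ, |U t x| ≤ M)

noncomputable def J (L0 : ℝ → ℝ) (U : ℝ → ℝ → ℝ) (a : ℝ) (n : ℕ) : ℝ :=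
  sInf { c | ∃ y x : ℝ, c = Lan L0 U a n y x }

lemma Jset_nonempty (n : ℕ) : { c | ∃ y x : ℝ, c = Lan L0 U a n y x }.Nonempty :=
  ⟨_, 0, 0, rfl⟩

include hH0c hsup hL0 hUc hM in
lemma J_le {n : ℕ} (hn : 0 < n) (y x : ℝ) : J L0 U a n ≤ Lan L0 U a n y x :=
  csInf_le ⟨-(n : ℝ) * (H0 a + M), by
    rintro c ⟨y', x', rfl⟩; exact Lan_ge hH0c hsup hL0 hUc hM hn y' x'⟩ ⟨y, x, rfl⟩

lemma J_exists_lt (n : ℕ) {ε : ℝ} (hε : 0 < ε) :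
    ∃ y x : ℝ, Lan L0 U a n y x < J L0 U a n + ε := by
  obtain ⟨c, ⟨y, x, rfl⟩, hlt⟩ := exists_lt_of_csInf_lt (Jset_nonempty (L0 := L0) (U := U) (a := a) n)
    (show sInf { c | ∃ y x : ℝ, c = Lan L0 U a n y x } < J L0 U a n + ε by
      unfold J; linarith)
  exact ⟨y, x, hlt⟩

include hH0c hsup hL0 hUc hper hM in
lemma J_superadd {n₀ n' : ℕ} (hn₀ : 0 < n₀) (hn' : 0 < n') :
    J L0 U a n₀ + J L0 U a n' ≤ J L0 U a (n₀ + n') := by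
  refine le_of_forall_pos_le_add (fun ε hε => ?_)
  have hε2 : 0 < ε / 2 := by linarith
  obtain ⟨y, x, hyx⟩ := J_exists_lt (L0 := L0) (U := U) (a := a) (n₀ + n') hε2
  obtain ⟨z, hz⟩ := Lan_split (a := a) hH0c hsup hL0 hUc hper hM hn₀ hn' y x hε2
  have h1 := J_le (a := a) hH0c hsup hL0 hUc hM hn₀ y z
  have h2 := J_le (a := a) hH0c hsup hL0 hUc hM hn' z x
  linarith

include hH0c hsup hL0 hUc hper hM in
lemma J_subadd {Cstar : ℝ} (hCpos : 0 < Cstar)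
    (hLip : ∀ n : ℕ, 0 < n → ∀ y x₁ x₂ : ℝ,
      |Lan L0 U a n y x₁ - Lan L0 U a n y x₂| ≤ Cstar * |x₁ - x₂|)
    {n₀ n' : ℕ} (hn₀ : 0 < n₀) (hn' : 0 < n') :
    J L0 U a (n₀ + n') ≤ J L0 U a n₀ + J L0 U a n' + Cstar := by
  refine le_of_forall_pos_le_add (fun ε hε => ?_)
  have hε2 : 0 < ε / 2 := by linarith
  obtain ⟨y, z, hyz⟩ := J_exists_lt (L0 := L0) (U := U) (a := a) n₀ hε2
  obtain ⟨y', x', hyx'⟩ := J_exists_lt (L0 := L0) (U := U) (a := a) n' hε2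
  set m : ℤ := ⌊z - y'⌋ with hm
  have habs : |y' + (m:ℝ) - z| ≤ 1 := by
    have h1 : y' + (m:ℝ) - z = -(Int.fract (z - y')) := by
      rw [Int.fract, hm]; push_cast; ring
    rw [h1, abs_neg, abs_of_nonneg (Int.fract_nonneg _)]
    exact (Int.fract_lt_one _).le
  have hchain := Lan_chain (a := a) hH0c hsup hL0 hUc hper hM hn₀ hn' y (y' + (m:ℝ)) (x' + (m:ℝ))
  have hshift := Lan_shift (L0 := L0) (U := U) (a := a) hper n' y' x' m
  have hlip := hLip n₀ hn₀ y (y' + (m:ℝ)) z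
  have hlip2 : |Lan L0 U a n₀ y (y' + (m:ℝ)) - Lan L0 U a n₀ y z| ≤ Cstar := by
    calc |Lan L0 U a n₀ y (y' + (m:ℝ)) - Lan L0 U a n₀ y z| ≤ Cstar * |y' + (m:ℝ) - z| := hlip
      _ ≤ Cstar * 1 := mul_le_mul_of_nonneg_left habs hCpos.le
      _ = Cstar := mul_one _
  have h0 := J_le (a := a) hH0c hsup hL0 hUc hM (Nat.add_pos_left hn₀ n') y (x' + (m:ℝ))
  have habs2 := abs_le.mp hlip2
  rw [hshift] at hchain
  linarith

include hH0c hsup hL0 hUc hM in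
lemma Hn_eq {n : ℕ} (hn : 0 < n) : Hn L0 U a n = -(1 / (n : ℝ)) * J L0 U a n := by
  have hnR : (0:ℝ) < (n:ℝ) := by exact_mod_cast hn
  have hbdd : BddAbove { h | ∃ y x : ℝ, h = -(1 / (n : ℝ)) * Lan L0 U a n y x } := by
    refine ⟨H0 a + M, ?_⟩
    rintro h ⟨y, x, rfl⟩
    have hge := Lan_ge (a := a) hH0c hsup hL0 hUc hM hn y x
    rw [neg_mul, neg_le]
    calc -(H0 a + M) = 1 / (n:ℝ) * (-(n:ℝ) * (H0 a + M)) := by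
          field_simp
      _ ≤ 1 / (n:ℝ) * Lan L0 U a n y x :=
          mul_le_mul_of_nonneg_left hge (by positivity)
  unfold Hn
  apply le_antisymm
  · refine csSup_le ⟨_, 0, 0, rfl⟩ ?_
    rintro h ⟨y, x, rfl⟩
    have := J_le (a := a) hH0c hsup hL0 hUc hM hn y x
    have h1 : 1 / (n:ℝ) * J L0 U a n ≤ 1 / (n:ℝ) * Lan L0 U a n y x :=
      mul_le_mul_of_nonneg_left this (by positivity)
    rw [neg_mul, neg_mul, neg_le_neg_iff]
    exact h1
  · refine le_of_forall_pos_le_add (fun ε hε => ?_)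
    obtain ⟨y, x, hyx⟩ := J_exists_lt (L0 := L0) (U := U) (a := a) n
      (show (0:ℝ) < (n:ℝ) * ε by positivity)
    have hmem : -(1 / (n : ℝ)) * Lan L0 U a n y x ∈
        { h | ∃ y x : ℝ, h = -(1 / (n : ℝ)) * Lan L0 U a n y x } := ⟨y, x, rfl⟩
    have hle := le_csSup hbdd hmem
    have h1 : -(1 / (n:ℝ)) * (J L0 U a n + (n:ℝ) * ε) ≤ -(1 / (n:ℝ)) * Lan L0 U a n y x := by
      rw [neg_mul, neg_mul, neg_le_neg_iff]
      exact mul_le_mul_of_nonneg_left hyx.le (by positivity)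
    have h2 : -(1 / (n:ℝ)) * (J L0 U a n + (n:ℝ) * ε) =
        -(1 / (n:ℝ)) * J L0 U a n - ε := by field_simp; ring
    linarith

end J

end HnAux

/-- The sequence `n·Hₙ(a)` is approximately sub/superadditive:
`|n·Hₙ(a) − n₀·H_{n₀}(a) − (n−n₀)·H_{n−n₀}(a)| ≤ C*(a)` for `0 < n₀ < n`, and
consequently `Hₙ(a)` converges to a limit `H(a)` with `|Hₙ(a) − H(a)| ≤ C*(a)/n`. -/
theorem Hn_converges
    (H0 L0 : ℝ → ℝ) (U : ℝ → ℝ → ℝ) (a Cstar : ℝ)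
    (hH0 : ContDiff ℝ 1 H0)
    (hmono : StrictMono (deriv H0))
    (hloc : ∀ P > (0 : ℝ), ∃ C > (0 : ℝ), ∀ p₁ ∈ Set.Icc (-P) P, ∀ p₂ ∈ Set.Icc (-P) P,
      |deriv H0 p₁ - deriv H0 p₂| ≤ C * |p₁ - p₂|)
    (hsup : ∀ N > (0 : ℝ), ∃ P > (0 : ℝ), ∀ p : ℝ, P < |p| → N * |p| < H0 p)
    (hU : ContDiff ℝ 1 fun q : ℝ × ℝ => U q.1 q.2)
    (hUx : ∃ C > (0 : ℝ), ∀ t x₁ x₂ : ℝ, |deriv (U t) x₁ - deriv (U t) x₂| ≤ C * |x₁ - x₂|)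
    (hper : ∀ t x : ℝ, U (t + 1) x = U t x ∧ U t (x + 1) = U t x)
    (hL0 : ∀ v : ℝ, L0 v = sSup (Set.range fun p : ℝ => p * v - H0 p))
    (hCpos : 0 < Cstar)
    (hLip : ∀ n : ℕ, 0 < n → ∀ y x₁ x₂ : ℝ,
      |Lan L0 U a n y x₁ - Lan L0 U a n y x₂| ≤ Cstar * |x₁ - x₂|) :
    (∀ n₀ n : ℕ, 0 < n₀ → n₀ < n →
      |(n : ℝ) * Hn L0 U a n - (n₀ : ℝ) * Hn L0 U a n₀ -
        ((n : ℝ) - (n₀ : ℝ)) * Hn L0 U a (n - n₀)| ≤ Cstar) ∧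
    ∃ Ha : ℝ, ∀ n : ℕ, 0 < n → |Hn L0 U a n - Ha| ≤ Cstar / (n : ℝ) := by
  classical
  have hH0c : Continuous H0 := hH0.continuous
  have hUc : Continuous fun q : ℝ × ℝ => U q.1 q.2 := hU.continuous
  obtain ⟨M, hM0, hM⟩ := HnAux.U_bound hper hUc
  set Jf : ℕ → ℝ := HnAux.J L0 U a with hJf
  have key : ∀ m : ℕ, 0 < m → (m:ℝ) * Hn L0 U a m = -Jf m := by
    intro m hm
    rw [HnAux.Hn_eq hH0c hsup hL0 hUc hM hm]
    have hm0 : (m:ℝ) ≠ 0 := by positivity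
    simp only [hJf]
    field_simp
  have part1 : ∀ n₀ n : ℕ, 0 < n₀ → n₀ < n →
      |(n : ℝ) * Hn L0 U a n - (n₀ : ℝ) * Hn L0 U a n₀ -
        ((n : ℝ) - (n₀ : ℝ)) * Hn L0 U a (n - n₀)| ≤ Cstar := by
    intro n₀ n hn₀ hlt
    have hn' : 0 < n - n₀ := Nat.sub_pos_of_lt hlt
    have hcast : ((n:ℝ) - (n₀:ℝ)) = ((n - n₀ : ℕ) : ℝ) := by
      rw [Nat.cast_sub hlt.le]
    rw [key n (hn₀.trans hlt), key n₀ hn₀, hcast, key (n - n₀) hn']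
    have hsup' := HnAux.J_superadd (a := a) hH0c hsup hL0 hUc hper hM hn₀ hn'
    have hsub' := HnAux.J_subadd (a := a) hH0c hsup hL0 hUc hper hM hCpos hLip hn₀ hn'
    rw [Nat.add_sub_cancel' hlt.le] at hsup' hsub'
    rw [abs_le]
    constructor
    · simp only [hJf] at *; linarith
    · simp only [hJf] at *; linarith
  refine ⟨part1, ?_⟩
  set u : ℕ → ℝ := fun m => if m = 0 then 0 else -Jf m + Cstar with hu_def
  set v : ℕ → ℝ := fun m => if m = 0 then 0 else Jf m + Cstar with hv_def
  have husub : Subadditive u := by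
    intro p q
    rcases Nat.eq_zero_or_pos p with hp | hp
    · subst hp; simp [hu_def]
    rcases Nat.eq_zero_or_pos q with hq | hq
    · subst hq; simp [hu_def]
    have hJ := HnAux.J_superadd (a := a) hH0c hsup hL0 hUc hper hM hp hq
    simp only [hu_def, if_neg hp.ne', if_neg hq.ne', if_neg (Nat.add_pos_left hp q).ne']
    simp only [hJf] at *
    linarith
  have hvsub : Subadditive v := by
    intro p q
    rcases Nat.eq_zero_or_pos p with hp | hp
    · subst hp; simp [hv_def]
    rcases Nat.eq_zero_or_pos q with hq | hq
    · subst hq; simp [hv_def]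
    have hJ := HnAux.J_subadd (a := a) hH0c hsup hL0 hUc hper hM hCpos hLip hp hq
    simp only [hv_def, if_neg hp.ne', if_neg hq.ne', if_neg (Nat.add_pos_left hp q).ne']
    simp only [hJf] at *
    linarith
  have hub : BddBelow (Set.range fun m : ℕ => u m / m) := by
    refine ⟨min 0 (-(Jf 1 + Cstar)), ?_⟩
    rintro _ ⟨m, rfl⟩
    rcases Nat.eq_zero_or_pos m with hm | hm
    · subst hm
      simp [hu_def]
    · have hmR : (0:ℝ) < m := by exact_mod_cast hm
      have hvm := hvsub.apply_mul_add_le m 1 0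
      simp only [mul_one, add_zero] at hvm
      have hv0 : v 0 = 0 := by simp [hv_def]
      have hv1 : v 1 = Jf 1 + Cstar := by simp [hv_def]
      have hvm' : v m = Jf m + Cstar := by simp [hv_def, hm.ne']
      have hum : u m = -Jf m + Cstar := by simp [hu_def, hm.ne']
      have hexp : (m:ℝ) * (-(Jf 1 + Cstar)) = -((m:ℝ) * (Jf 1 + Cstar)) := by ring
      have h1 : (m:ℝ) * (-(Jf 1 + Cstar)) ≤ u m := by
        rw [hexp, hum]
        rw [hv0, hv1, hvm'] at hvm
        linarith
      refine le_trans (min_le_right _ _) ?_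
      rw [le_div_iff₀ hmR]
      linarith [h1]
  have hvb : BddBelow (Set.range fun m : ℕ => v m / m) := by
    refine ⟨min 0 (Jf 1 - Cstar), ?_⟩
    rintro _ ⟨m, rfl⟩
    rcases Nat.eq_zero_or_pos m with hm | hm
    · subst hm
      simp [hv_def]
    · have hmR : (0:ℝ) < m := by exact_mod_cast hm
      have hum2 := husub.apply_mul_add_le m 1 0
      simp only [mul_one, add_zero] at hum2
      have hu0 : u 0 = 0 := by simp [hu_def]
      have hu1 : u 1 = -Jf 1 + Cstar := by simp [hu_def]
      have hum' : u m = -Jf m + Cstar := by simp [hu_def, hm.ne']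
      have hvm : v m = Jf m + Cstar := by simp [hv_def, hm.ne']
      have hexp : (m:ℝ) * (Jf 1 - Cstar) = -((m:ℝ) * (-Jf 1 + Cstar)) := by ring
      have h1 : (m:ℝ) * (Jf 1 - Cstar) ≤ v m := by
        rw [hexp, hvm]
        rw [hu0, hu1, hum'] at hum2
        linarith
      refine le_trans (min_le_right _ _) ?_
      rw [le_div_iff₀ hmR]
      linarith [h1]
  have Tu := husub.tendsto_lim hub
  have Tv := hvsub.tendsto_lim hvb
  have hlim0 : husub.lim + hvsub.lim = 0 := by
    have hadd := Tu.add Tv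
    have heq : (fun m : ℕ => u m / m + v m / m) =ᶠ[Filter.atTop]
        fun m : ℕ => 2 * Cstar / m := by
      filter_upwards [Filter.eventually_ge_atTop 1] with m hm
      have hm0 : m ≠ 0 := by omega
      rw [← add_div]
      congr 1
      simp only [hu_def, hv_def, if_neg hm0]
      ring
    have h2 : Filter.Tendsto (fun m : ℕ => 2 * Cstar / m) Filter.atTop (nhds 0) :=
      tendsto_const_div_atTop_nhds_zero_nat _
    exact tendsto_nhds_unique (hadd.congr' heq) h2
  refine ⟨husub.lim, fun n hn => ?_⟩
  have hnR : (0:ℝ) < n := by exact_mod_cast hn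
  have h1 := husub.lim_le_div hub hn.ne'
  have h2 := hvsub.lim_le_div hvb hn.ne'
  have hHn : Hn L0 U a n = -Jf n / n := by
    rw [HnAux.Hn_eq hH0c hsup hL0 hUc hM hn]
    ring
  have hun : u n / n = -Jf n / n + Cstar / n := by
    simp only [hu_def, if_neg hn.ne']
    rw [add_div]
  have hvn : v n / n = Jf n / n + Cstar / n := by
    simp only [hv_def, if_neg hn.ne']
    rw [add_div]
  rw [hun] at h1
  rw [hvn] at h2
  have hJdiv : Jf n / n = -(-Jf n / n) := by ring
  rw [abs_le, hHn]
  constructor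
  · linarith
  · rw [hJdiv] at h2
    linarith
end

section
/- The effective Hamiltonian H(a) = lim_n Hₙ(a) is a convex function of a and satisfies min U ≤ H(a) − H₀(a) ≤ max U. -/
open MeasureTheory

lemma bddAbove_leg {H0 : ℝ → ℝ} (hH0 : ContDiff ℝ 1 H0)
    (hsup : ∀ N > (0:ℝ), ∃ P > (0:ℝ), ∀ p : ℝ, P < |p| → N * |p| < H0 p) (v : ℝ) :
    BddAbove (Set.range fun p : ℝ => p * v - H0 p) := by
  obtain ⟨P, hP, hPb⟩ := hsup (|v| + 1) (by positivity)
  obtain ⟨c, hc, hmin⟩ := (isCompact_Icc (a := -P) (b := P)).exists_isMinOn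
    (Set.nonempty_Icc.2 (by linarith)) hH0.continuous.continuousOn
  refine ⟨max 0 (P * |v| - H0 c), Set.forall_mem_range.2 fun p => ?_⟩
  by_cases h : P < |p|
  · have h1 := hPb p h
    have h2 : p * v ≤ |p| * |v| := by
      calc p * v ≤ |p * v| := le_abs_self _
      _ = |p| * |v| := abs_mul _ _
    have : p * v - H0 p ≤ 0 := by nlinarith [abs_nonneg p, abs_nonneg v]
    exact this.trans (le_max_left _ _)
  · push_neg at h
    have hp : p ∈ Set.Icc (-P) P := abs_le.1 h
    have h2 : p * v ≤ P * |v| := by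
      calc p * v ≤ |p * v| := le_abs_self _
      _ = |p| * |v| := abs_mul _ _
      _ ≤ P * |v| := by nlinarith [abs_nonneg v]
    have h3 : H0 c ≤ H0 p := hmin hp
    have : p * v - H0 p ≤ P * |v| - H0 c := by linarith
    exact this.trans (le_max_right _ _)

lemma tangent_le {H0 : ℝ → ℝ} (hH0 : ContDiff ℝ 1 H0) (hmono : StrictMono (deriv H0))
    (a p : ℝ) : H0 a + deriv H0 a * (p - a) ≤ H0 p := by
  have hdiff := hH0.differentiable one_ne_zero
  rcases lt_trichotomy p a with h | h | h
  · obtain ⟨c, hc, hd⟩ := exists_deriv_eq_slope H0 h hH0.continuous.continuousOn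
      (hdiff.differentiableOn)
    have h1 : deriv H0 c < deriv H0 a := hmono hc.2
    have hne : a - p ≠ 0 := by linarith
    have h2 : deriv H0 c * (a - p) = H0 a - H0 p := by
      field_simp [hne] at hd; linarith [hd]
    nlinarith
  · simp [h]
  · obtain ⟨c, hc, hd⟩ := exists_deriv_eq_slope H0 h hH0.continuous.continuousOn
      (hdiff.differentiableOn)
    have h1 : deriv H0 a < deriv H0 c := hmono hc.1
    have hne : p - a ≠ 0 := by linarith
    have h2 : deriv H0 c * (p - a) = H0 p - H0 a := by
      field_simp [hne] at hd; linarith [hd]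
    nlinarith

lemma L0_ge {H0 L0 : ℝ → ℝ} (hH0 : ContDiff ℝ 1 H0)
    (hsup : ∀ N > (0:ℝ), ∃ P > (0:ℝ), ∀ p : ℝ, P < |p| → N * |p| < H0 p)
    (hL0 : ∀ v : ℝ, L0 v = sSup (Set.range fun p : ℝ => p * v - H0 p))
    (p v : ℝ) : p * v - H0 p ≤ L0 v := by
  rw [hL0 v]
  exact le_csSup (bddAbove_leg hH0 hsup v) ⟨p, rfl⟩

lemma L0_deriv {H0 L0 : ℝ → ℝ} (hH0 : ContDiff ℝ 1 H0) (hmono : StrictMono (deriv H0))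
    (hsup : ∀ N > (0:ℝ), ∃ P > (0:ℝ), ∀ p : ℝ, P < |p| → N * |p| < H0 p)
    (hL0 : ∀ v : ℝ, L0 v = sSup (Set.range fun p : ℝ => p * v - H0 p))
    (a : ℝ) : L0 (deriv H0 a) = a * deriv H0 a - H0 a := by
  have h1 := L0_ge hH0 hsup hL0 a (deriv H0 a)
  have h2 : L0 (deriv H0 a) ≤ a * deriv H0 a - H0 a := by
    rw [hL0]
    refine csSup_le ⟨a * deriv H0 a - H0 a, ⟨a, rfl⟩⟩ ?_
    rintro x ⟨p, rfl⟩
    have := tangent_le hH0 hmono a p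
    show p * deriv H0 a - H0 p ≤ _
    nlinarith
  linarith


def VS (L0 : ℝ → ℝ) (U : ℝ → ℝ → ℝ) (y x : ℝ) (n : ℕ) : Set ℝ :=
  { A | ∃ ξ g : ℝ → ℝ, Admissible 0 y n x ξ g ∧
    IntervalIntegrable (fun τ => L0 (g τ) - U τ (ξ τ)) volume 0 n ∧
    A = ∫ τ in (0:ℝ)..n, (L0 (g τ) - U τ (ξ τ)) }

lemma val_eq (L0 : ℝ → ℝ) (U : ℝ → ℝ → ℝ) (y x : ℝ) (n : ℕ) :
    val L0 U 0 y n x = sInf (VS L0 U y x n) := rfl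

section VAL
variable {H0 L0 : ℝ → ℝ} {U : ℝ → ℝ → ℝ} {m M : ℝ}

lemma VS_mem_ge (hH0 : ContDiff ℝ 1 H0)
    (hsup : ∀ N > (0:ℝ), ∃ P > (0:ℝ), ∀ p : ℝ, P < |p| → N * |p| < H0 p)
    (hL0 : ∀ v : ℝ, L0 v = sSup (Set.range fun p : ℝ => p * v - H0 p))
    (hM1 : ∀ t x : ℝ, U t x ≤ M) (p y x : ℝ) (n : ℕ) :
    ∀ A ∈ VS L0 U y x n, p * (x - y) - n * (H0 p + M) ≤ A := by
  rintro A ⟨ξ, g, ⟨hg, hξ, hξn⟩, hint, rfl⟩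
  have hn0 : (0:ℝ) ≤ n := n.cast_nonneg
  have hxy : ∫ τ in (0:ℝ)..(n:ℝ), g τ = x - y := by
    have h := hξ n ⟨hn0, le_rfl⟩
    rw [hξn] at h; linarith
  have hmono := intervalIntegral.integral_mono_on hn0
    ((hg.const_mul p).sub intervalIntegrable_const) hint
    (fun τ hτ => by
      have h1 := L0_ge hH0 hsup hL0 p (g τ)
      have h2 := hM1 τ (ξ τ)
      show p * g τ - (H0 p + M) ≤ _
      linarith)
  rw [intervalIntegral.integral_sub (hg.const_mul p) intervalIntegrable_const,
    intervalIntegral.integral_const_mul, hxy, intervalIntegral.integral_const] at hmono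
  simp only [smul_eq_mul, sub_zero] at hmono
  linarith

lemma VS_nonempty (hUc : Continuous fun q : ℝ × ℝ => U q.1 q.2)
    (y x : ℝ) (n : ℕ) (hn : (0:ℝ) < n) : (VS L0 U y x n).Nonempty := by
  set v : ℝ := (x - y) / n with hv
  have hUcc : Continuous fun τ : ℝ => U τ (y + v * τ) :=
    hUc.comp (continuous_id.prodMk (continuous_const.add (continuous_const.mul continuous_id)))
  have hcont : Continuous fun τ : ℝ => L0 v - U τ (y + v * τ) := continuous_const.sub hUcc
  refine ⟨_, (fun τ => y + v * τ), (fun _ => v), ⟨intervalIntegrable_const, ?_, ?_⟩,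
    hcont.intervalIntegrable _ _, rfl⟩
  · intro r hr
    rw [intervalIntegral.integral_const]
    simp [smul_eq_mul, mul_comm]
  · show y + v * n = x
    rw [hv, div_mul_cancel₀ _ hn.ne']; ring

lemma VS_bddBelow (hH0 : ContDiff ℝ 1 H0)
    (hsup : ∀ N > (0:ℝ), ∃ P > (0:ℝ), ∀ p : ℝ, P < |p| → N * |p| < H0 p)
    (hL0 : ∀ v : ℝ, L0 v = sSup (Set.range fun p : ℝ => p * v - H0 p))
    (hM1 : ∀ t x : ℝ, U t x ≤ M) (y x : ℝ) (n : ℕ) : BddBelow (VS L0 U y x n) :=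
  ⟨0 * (x - y) - n * (H0 0 + M), fun A hA => VS_mem_ge hH0 hsup hL0 hM1 0 y x n A hA⟩

lemma val_ge (hH0 : ContDiff ℝ 1 H0)
    (hsup : ∀ N > (0:ℝ), ∃ P > (0:ℝ), ∀ p : ℝ, P < |p| → N * |p| < H0 p)
    (hL0 : ∀ v : ℝ, L0 v = sSup (Set.range fun p : ℝ => p * v - H0 p))
    (hUc : Continuous fun q : ℝ × ℝ => U q.1 q.2)
    (hM1 : ∀ t x : ℝ, U t x ≤ M) (p y x : ℝ) (n : ℕ) (hn : (0:ℝ) < n) :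
    p * (x - y) - n * (H0 p + M) ≤ val L0 U 0 y n x := by
  rw [val_eq]
  exact le_csInf (VS_nonempty hUc y x n hn) (VS_mem_ge hH0 hsup hL0 hM1 p y x n)

lemma val_le (hH0 : ContDiff ℝ 1 H0)
    (hsup : ∀ N > (0:ℝ), ∃ P > (0:ℝ), ∀ p : ℝ, P < |p| → N * |p| < H0 p)
    (hL0 : ∀ v : ℝ, L0 v = sSup (Set.range fun p : ℝ => p * v - H0 p))
    (hUc : Continuous fun q : ℝ × ℝ => U q.1 q.2)
    (hM1 : ∀ t x : ℝ, U t x ≤ M)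
    (hm1 : ∀ t x : ℝ, m ≤ U t x) (y x : ℝ) (n : ℕ) (hn : (0:ℝ) < n) :
    val L0 U 0 y n x ≤ n * L0 ((x - y) / n) - n * m := by
  rw [val_eq]
  set v : ℝ := (x - y) / n with hv
  have hUcc : Continuous fun τ : ℝ => U τ (y + v * τ) :=
    hUc.comp (continuous_id.prodMk (continuous_const.add (continuous_const.mul continuous_id)))
  have hcont : Continuous fun τ : ℝ => L0 v - U τ (y + v * τ) := continuous_const.sub hUcc
  have hmem : (∫ τ in (0:ℝ)..(n:ℝ), (L0 v - U τ (y + v * τ))) ∈ VS L0 U y x n := by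
    refine ⟨(fun τ => y + v * τ), (fun _ => v), ⟨intervalIntegrable_const, ?_, ?_⟩,
      hcont.intervalIntegrable _ _, rfl⟩
    · intro r hr
      rw [intervalIntegral.integral_const]
      simp [smul_eq_mul, mul_comm]
    · show y + v * n = x
      rw [hv, div_mul_cancel₀ _ hn.ne']; ring
  refine le_trans (csInf_le (VS_bddBelow hH0 hsup hL0 hM1 y x n) hmem) ?_
  have hmono := intervalIntegral.integral_mono_on (n.cast_nonneg : (0:ℝ) ≤ n)
    (hcont.intervalIntegrable 0 n)
    (intervalIntegrable_const (μ := volume) (c := L0 v - m))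
    (fun τ hτ => by have := hm1 τ (y + v * τ); show _ ≤ L0 v - m; linarith)
  rw [intervalIntegral.integral_const] at hmono
  simp only [smul_eq_mul, sub_zero] at hmono
  linarith [hmono, mul_sub (n:ℝ) (L0 v) m]

end VAL
def LS (L0 : ℝ → ℝ) (U : ℝ → ℝ → ℝ) (a : ℝ) (n : ℕ) (y x : ℝ) : Set ℝ :=
  { c | ∃ k : ℤ, c = val L0 U 0 (y + k) n x + a * (y + k - x) }

lemma lan_eq (L0 : ℝ → ℝ) (U : ℝ → ℝ → ℝ) (a : ℝ) (n : ℕ) (y x : ℝ) :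
    Lan L0 U a n y x = sInf (LS L0 U a n y x) := rfl

def HS (L0 : ℝ → ℝ) (U : ℝ → ℝ → ℝ) (a : ℝ) (n : ℕ) : Set ℝ :=
  { h | ∃ y x : ℝ, h = -(1 / (n : ℝ)) * Lan L0 U a n y x }

lemma hn_eq (L0 : ℝ → ℝ) (U : ℝ → ℝ → ℝ) (a : ℝ) (n : ℕ) :
    Hn L0 U a n = sSup (HS L0 U a n) := rfl

section LAN
variable {H0 L0 : ℝ → ℝ} {U : ℝ → ℝ → ℝ} {m M : ℝ}
variable (hH0 : ContDiff ℝ 1 H0)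
  (hsup : ∀ N > (0:ℝ), ∃ P > (0:ℝ), ∀ p : ℝ, P < |p| → N * |p| < H0 p)
  (hL0 : ∀ v : ℝ, L0 v = sSup (Set.range fun p : ℝ => p * v - H0 p))
  (hUc : Continuous fun q : ℝ × ℝ => U q.1 q.2)
  (hM1 : ∀ t x : ℝ, U t x ≤ M)
include hH0 hsup hL0 hUc hM1

lemma LS_mem_ge (a y x : ℝ) (n : ℕ) (hn : (0:ℝ) < n) :
    ∀ c ∈ LS L0 U a n y x, -(n:ℝ) * (H0 a + M) ≤ c := by
  rintro c ⟨k, rfl⟩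
  have h := val_ge hH0 hsup hL0 hUc hM1 a (y + k) x n hn
  have hid : a * (x - (y + k)) + a * (y + k - x) = 0 := by ring
  linarith

lemma LS_bddBelow (a y x : ℝ) (n : ℕ) (hn : (0:ℝ) < n) :
    BddBelow (LS L0 U a n y x) :=
  ⟨-(n:ℝ) * (H0 a + M), fun c hc => LS_mem_ge hH0 hsup hL0 hUc hM1 a y x n hn c hc⟩

lemma lan_ge (a y x : ℝ) (n : ℕ) (hn : (0:ℝ) < n) :
    -(n:ℝ) * (H0 a + M) ≤ Lan L0 U a n y x := by
  rw [lan_eq]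
  exact le_csInf ⟨_, ⟨0, rfl⟩⟩ (LS_mem_ge hH0 hsup hL0 hUc hM1 a y x n hn)

lemma HS_mem_le (a : ℝ) (n : ℕ) (hn : (0:ℝ) < n) :
    ∀ h ∈ HS L0 U a n, h ≤ H0 a + M := by
  rintro h ⟨y, x, rfl⟩
  have hlan := lan_ge hH0 hsup hL0 hUc hM1 a y x n hn
  have h1 : (0:ℝ) < 1 / n := by positivity
  have h3 : (1/(n:ℝ)) * (-(n:ℝ) * (H0 a + M)) = -(H0 a + M) := by field_simp
  linarith [mul_le_mul_of_nonneg_left hlan h1.le, h3]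

lemma HS_bddAbove (a : ℝ) (n : ℕ) (hn : (0:ℝ) < n) : BddAbove (HS L0 U a n) :=
  ⟨H0 a + M, HS_mem_le hH0 hsup hL0 hUc hM1 a n hn⟩

lemma hn_le (a : ℝ) (n : ℕ) (hn : (0:ℝ) < n) : Hn L0 U a n ≤ H0 a + M := by
  rw [hn_eq]
  exact csSup_le ⟨_, 0, 0, rfl⟩ (HS_mem_le hH0 hsup hL0 hUc hM1 a n hn)

lemma hn_ge (hmono : StrictMono (deriv H0)) (hm1 : ∀ t x : ℝ, m ≤ U t x)
    (a : ℝ) (n : ℕ) (hn : (0:ℝ) < n) : H0 a + m ≤ Hn L0 U a n := by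
  set v : ℝ := deriv H0 a with hv
  set x : ℝ := (n:ℝ) * v with hx
  have hmem : -(1 / (n:ℝ)) * Lan L0 U a n 0 x ∈ HS L0 U a n := ⟨0, x, rfl⟩
  have hle : -(1 / (n:ℝ)) * Lan L0 U a n 0 x ≤ Hn L0 U a n := by
    rw [hn_eq]
    exact le_csSup (HS_bddAbove hH0 hsup hL0 hUc hM1 a n hn) hmem
  have hlan : Lan L0 U a n 0 x ≤ val L0 U 0 (0 + ((0:ℤ):ℝ)) n x + a * (0 + ((0:ℤ):ℝ) - x) := by
    rw [lan_eq]
    exact csInf_le (LS_bddBelow hH0 hsup hL0 hUc hM1 a 0 x n hn) ⟨0, rfl⟩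
  have hz : (0:ℝ) + ((0:ℤ):ℝ) = 0 := by norm_num
  rw [hz] at hlan
  have hval : val L0 U 0 0 n x ≤ (n:ℝ) * L0 ((x - 0) / n) - n * m :=
    val_le hH0 hsup hL0 hUc hM1 hm1 0 x n hn
  have hvx : (x - 0) / (n:ℝ) = v := by
    rw [hx]; field_simp; ring
  rw [hvx] at hval
  have hLv : L0 v = a * v - H0 a := L0_deriv hH0 hmono hsup hL0 a
  have hlan2 : Lan L0 U a n 0 x ≤ -(n:ℝ) * (H0 a + m) := by
    rw [hLv] at hval
    have : a * (0 - x) = -((n:ℝ) * (a * v)) := by rw [hx]; ring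
    nlinarith [hval, hlan]
  have h1 : (0:ℝ) < 1 / n := by positivity
  have h3 : (1/(n:ℝ)) * (-(n:ℝ) * (H0 a + m)) = -(H0 a + m) := by field_simp
  linarith [mul_le_mul_of_nonneg_left hlan2 h1.le, h3, hle]

lemma hn_convex (a b t s : ℝ) (ht : 0 ≤ t) (hs : 0 ≤ s) (hts : t + s = 1)
    (n : ℕ) (hn : (0:ℝ) < n) :
    Hn L0 U (t * a + s * b) n ≤ t * Hn L0 U a n + s * Hn L0 U b n := by
  rw [hn_eq]
  refine csSup_le ⟨_, 0, 0, rfl⟩ ?_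
  rintro h ⟨y, x, rfl⟩
  have hLan : t * Lan L0 U a n y x + s * Lan L0 U b n y x ≤ Lan L0 U (t * a + s * b) n y x := by
    show t * Lan L0 U a n y x + s * Lan L0 U b n y x
      ≤ sInf (LS L0 U (t * a + s * b) n y x)
    refine le_csInf ⟨_, ⟨0, rfl⟩⟩ ?_
    rintro c ⟨k, rfl⟩
    have h1 : Lan L0 U a n y x ≤ val L0 U 0 (y + k) n x + a * (y + k - x) :=
      csInf_le (LS_bddBelow hH0 hsup hL0 hUc hM1 a y x n hn) ⟨k, rfl⟩
    have h2 : Lan L0 U b n y x ≤ val L0 U 0 (y + k) n x + b * (y + k - x) :=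
      csInf_le (LS_bddBelow hH0 hsup hL0 hUc hM1 b y x n hn) ⟨k, rfl⟩
    have hid : t * (val L0 U 0 (y + k) n x + a * (y + k - x))
        + s * (val L0 U 0 (y + k) n x + b * (y + k - x))
        = (t + s) * val L0 U 0 (y + k) n x + (t * a + s * b) * (y + k - x) := by ring
    rw [hts, one_mul] at hid
    linarith [mul_le_mul_of_nonneg_left h1 ht, mul_le_mul_of_nonneg_left h2 hs, hid,
      lan_eq L0 U a n y x, lan_eq L0 U b n y x]
  have hmema : -(1 / (n:ℝ)) * Lan L0 U a n y x ≤ Hn L0 U a n := by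
    rw [hn_eq]
    exact le_csSup (HS_bddAbove hH0 hsup hL0 hUc hM1 a n hn) ⟨y, x, rfl⟩
  have hmemb : -(1 / (n:ℝ)) * Lan L0 U b n y x ≤ Hn L0 U b n := by
    rw [hn_eq]
    exact le_csSup (HS_bddAbove hH0 hsup hL0 hUc hM1 b n hn) ⟨y, x, rfl⟩
  have h1 : (0:ℝ) ≤ 1 / n := by positivity
  nlinarith [mul_le_mul_of_nonneg_left hLan h1,
    mul_le_mul_of_nonneg_left hmema ht, mul_le_mul_of_nonneg_left hmemb hs]

end LAN

/-- The effective Hamiltonian `H(a) = limₙ Hₙ(a)` is convex in `a` and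
satisfies `min U ≤ H(a) − H₀(a) ≤ max U`. -/
theorem effective_hamiltonian_convex_bounds
    (H0 L0 : ℝ → ℝ) (U : ℝ → ℝ → ℝ) (Heff : ℝ → ℝ) (m M : ℝ)
    (hH0 : ContDiff ℝ 1 H0)
    (hmono : StrictMono (deriv H0))
    (hloc : ∀ P > (0 : ℝ), ∃ C > (0 : ℝ), ∀ p₁ ∈ Set.Icc (-P) P, ∀ p₂ ∈ Set.Icc (-P) P,
      |deriv H0 p₁ - deriv H0 p₂| ≤ C * |p₁ - p₂|)
    (hsup : ∀ N > (0 : ℝ), ∃ P > (0 : ℝ), ∀ p : ℝ, P < |p| → N * |p| < H0 p)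
    (hU : ContDiff ℝ 1 fun q : ℝ × ℝ => U q.1 q.2)
    (hUx : ∃ C > (0 : ℝ), ∀ t x₁ x₂ : ℝ, |deriv (U t) x₁ - deriv (U t) x₂| ≤ C * |x₁ - x₂|)
    (hper : ∀ t x : ℝ, U (t + 1) x = U t x ∧ U t (x + 1) = U t x)
    (hL0 : ∀ v : ℝ, L0 v = sSup (Set.range fun p : ℝ => p * v - H0 p))
    (hm : (∀ t x : ℝ, m ≤ U t x) ∧ ∃ t x : ℝ, U t x = m)
    (hM : (∀ t x : ℝ, U t x ≤ M) ∧ ∃ t x : ℝ, U t x = M)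
    (hlim : ∀ a : ℝ, Filter.Tendsto (fun n : ℕ => Hn L0 U a n)
      Filter.atTop (nhds (Heff a))) :
    ConvexOn ℝ Set.univ Heff ∧
    ∀ a : ℝ, m ≤ Heff a - H0 a ∧ Heff a - H0 a ≤ M := by
  obtain ⟨hm1, -⟩ := hm
  obtain ⟨hM1, -⟩ := hM
  have hUc : Continuous fun q : ℝ × ℝ => U q.1 q.2 := hU.continuous
  constructor
  · refine ⟨convex_univ, ?_⟩
    intro a _ b _ t s ht hs hts
    simp only [smul_eq_mul]
    have key : ∀ᶠ n : ℕ in Filter.atTop,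
        Hn L0 U (t * a + s * b) n ≤ t * Hn L0 U a n + s * Hn L0 U b n := by
      filter_upwards [Filter.eventually_ge_atTop 1] with n hn1
      have hn : (0:ℝ) < n := by exact_mod_cast hn1
      exact hn_convex hH0 hsup hL0 hUc hM1 a b t s ht hs hts n hn
    exact le_of_tendsto_of_tendsto (hlim (t * a + s * b))
      (((hlim a).const_mul t).add ((hlim b).const_mul s)) key
  · intro a
    have hev1 : ∀ᶠ n : ℕ in Filter.atTop, H0 a + m ≤ Hn L0 U a n := by
      filter_upwards [Filter.eventually_ge_atTop 1] with n hn1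
      have hn : (0:ℝ) < n := by exact_mod_cast hn1
      exact hn_ge hH0 hsup hL0 hUc hM1 hmono hm1 a n hn
    have hev2 : ∀ᶠ n : ℕ in Filter.atTop, Hn L0 U a n ≤ H0 a + M := by
      filter_upwards [Filter.eventually_ge_atTop 1] with n hn1
      have hn : (0:ℝ) < n := by exact_mod_cast hn1
      exact hn_le hH0 hsup hL0 hUc hM1 a n hn
    have h1 : H0 a + m ≤ Heff a := ge_of_tendsto (hlim a) hev1
    have h2 : Heff a ≤ H0 a + M := le_of_tendsto (hlim a) hev2
    constructor <;> linarith
end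

section
/- Let x ∈ M^a and define the backward orbit xₖ = (Y^a)^{−k}(x) for k ∈ ℤ. Then {xₖ} is an L_a-minimal configuration: for all N₁ < N₂ and any finite sequence y_{N₁},…,y_{N₂} with y_{N₁} = x_{N₁} and y_{N₂} = x_{N₂}, Σ_{j=N₁}^{N₂−1} L_a(x_j, x_{j+1}) ≤ Σ_{j=N₁}^{N₂−1} L_a(y_j, y_{j+1}). -/
open MeasureTheory

/-- `L_a(y,x) = L(0,y;1,x) + a(y−x) + H(a)`. -/
noncomputable def La (L0 : ℝ → ℝ) (U : ℝ → ℝ → ℝ) (a Ha : ℝ) (y x : ℝ) : ℝ :=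
  val L0 U 0 y 1 x + a * (y - x) + Ha

/-- The many-valued map `Y^a(x) = argmin_y (s^a(y) + L_a(y,x))`. -/
def Ya (L0 : ℝ → ℝ) (U : ℝ → ℝ → ℝ) (a Ha : ℝ) (sa : ℝ → ℝ) (x : ℝ) : Set ℝ :=
  { y | ∀ z : ℝ, sa y + La L0 U a Ha y x ≤ sa z + La L0 U a Ha z x }

/-- `M₀ = ℝ`, `Mₙ = Y^a(M_{n−1})`. -/
def Mseq (L0 : ℝ → ℝ) (U : ℝ → ℝ → ℝ) (a Ha : ℝ) (sa : ℝ → ℝ) : ℕ → Set ℝ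
  | 0 => Set.univ
  | n + 1 => ⋃ x ∈ Mseq L0 U a Ha sa n, Ya L0 U a Ha sa x

private lemma sum_Ico_succ_aux (f : ℤ → ℝ) {a b : ℤ} (h : a ≤ b) :
    ∑ j ∈ Finset.Ico a (b + 1), f j = (∑ j ∈ Finset.Ico a b, f j) + f b := by
  have : Finset.Ico a (b + 1) = insert b (Finset.Ico a b) := by
    ext j; simp [Finset.mem_Ico]; omega
  rw [this, Finset.sum_insert Finset.right_notMem_Ico, add_comm]

/-- A backward orbit `xₖ = (Y^a)^{−k}(x)` of a point `x ∈ M^a` (encoded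
by `X k ∈ Y^a(X (k+1))`, `X k ∈ M^a`) is an `L_a`-minimal configuration: for all
`N₁ < N₂` and any sequence `y` with the same endpoints,
`Σ_{j=N₁}^{N₂−1} L_a(x_j, x_{j+1}) ≤ Σ_{j=N₁}^{N₂−1} L_a(y_j, y_{j+1})`. -/
theorem backward_orbit_minimal
    (H0 L0 : ℝ → ℝ) (U : ℝ → ℝ → ℝ) (a Ha : ℝ) (sa : ℝ → ℝ)
    (hH0 : ContDiff ℝ 1 H0)
    (hmono : StrictMono (deriv H0))
    (hloc : ∀ P > (0 : ℝ), ∃ C > (0 : ℝ), ∀ p₁ ∈ Set.Icc (-P) P, ∀ p₂ ∈ Set.Icc (-P) P,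
      |deriv H0 p₁ - deriv H0 p₂| ≤ C * |p₁ - p₂|)
    (hsup : ∀ N > (0 : ℝ), ∃ P > (0 : ℝ), ∀ p : ℝ, P < |p| → N * |p| < H0 p)
    (hU : ContDiff ℝ 1 fun q : ℝ × ℝ => U q.1 q.2)
    (hUx : ∃ C > (0 : ℝ), ∀ t x₁ x₂ : ℝ, |deriv (U t) x₁ - deriv (U t) x₂| ≤ C * |x₁ - x₂|)
    (hper : ∀ t x : ℝ, U (t + 1) x = U t x ∧ U t (x + 1) = U t x)
    (hL0 : ∀ v : ℝ, L0 v = sSup (Set.range fun p : ℝ => p * v - H0 p))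
    (hsa : Continuous sa) (hsaper : ∀ x : ℝ, sa (x + 1) = sa x)
    (hfe : ∀ x : ℝ, IsLeast { c | ∃ y : ℝ, c = sa y + La L0 U a Ha y x } (sa x))
    (X : ℤ → ℝ)
    (hXM : ∀ k : ℤ, X k ∈ ⋂ n : ℕ, Mseq L0 U a Ha sa n)
    (hXrel : ∀ k : ℤ, X k ∈ Ya L0 U a Ha sa (X (k + 1))) :
    ∀ N₁ N₂ : ℤ, N₁ < N₂ → ∀ Y : ℤ → ℝ, Y N₁ = X N₁ → Y N₂ = X N₂ →
      ∑ j ∈ Finset.Ico N₁ N₂, La L0 U a Ha (X j) (X (j + 1)) ≤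
        ∑ j ∈ Finset.Ico N₁ N₂, La L0 U a Ha (Y j) (Y (j + 1)) := by
  have hlb : ∀ y x : ℝ, sa x ≤ sa y + La L0 U a Ha y x := fun y x =>
    (hfe x).2 ⟨y, rfl⟩
  have hstep : ∀ k : ℤ, sa (X (k+1)) = sa (X k) + La L0 U a Ha (X k) (X (k+1)) := by
    intro k
    obtain ⟨y, hy⟩ := (hfe (X (k+1))).1
    have h1 := hXrel k y
    have h2 := hlb (X k) (X (k+1))
    linarith
  have key : ∀ (Z : ℤ → ℝ) (M₁ M₂ : ℤ), M₁ ≤ M₂ →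
      sa (Z M₂) - sa (Z M₁) ≤ ∑ j ∈ Finset.Ico M₁ M₂, La L0 U a Ha (Z j) (Z (j+1)) := by
    intro Z M₁
    refine Int.le_induction (by simp) (fun n hn ih => ?_)
    rw [sum_Ico_succ_aux _ hn]
    have := hlb (Z n) (Z (n+1))
    linarith
  have keyeq : ∀ M₁ M₂ : ℤ, M₁ ≤ M₂ →
      ∑ j ∈ Finset.Ico M₁ M₂, La L0 U a Ha (X j) (X (j+1)) = sa (X M₂) - sa (X M₁) := by
    intro M₁
    refine Int.le_induction (by simp) (fun n hn ih => ?_)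
    rw [sum_Ico_succ_aux _ hn, ih, hstep n]; ring
  intro N₁ N₂ h Y h1 h2
  rw [keyeq N₁ N₂ h.le]
  have hk := key Y N₁ N₂ h.le
  rw [h1, h2] at hk
  linarith
end
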